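/- arXiv:2410.17560 — 2 statements merged into one kernel-verified Lean document; each statement's English description precedes it below -/
import Mathlib

section
/- Let {1, (a₀+α)/d₁, (b₀+b₁α+α²)/d₂, (c₀+c₁α+c₂α²+α³)/d₃} be a normalised integral basis of O_N over ℤ[i]. Then gh divides d₂ and gh² divides d₃ in ℤ[i]; moreover, for every prime π of ℤ[i] coprime to 1+i, ν_π(d₂) = ν_π(gh) and ν_π(d₃) = ν_π(gh²). -/
open Polynomial

namespace QuarticKummerAux

lemma sqrtd_mul_self' : (Zsqrtd.sqrtd : GaussianInt) * Zsqrtd.sqrtd = -1 := by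
  ext <;> simp [Zsqrtd.re_mul, Zsqrtd.im_mul]

lemma sq_split {x π : GaussianInt} (hx : Squarefree x) (hπ : Prime π) (hd : π ∣ x) :
    ∃ x₁, x = π * x₁ ∧ ¬ π ∣ x₁ := by
  obtain ⟨x₁, rfl⟩ := hd
  exact ⟨x₁, rfl, fun hc => hπ.not_unit (hx π (mul_dvd_mul_left π hc))⟩

lemma not_dvd_right {π x y : GaussianInt} (hπ : Prime π) (hco : IsCoprime x y)
    (hdx : π ∣ x) : ¬ π ∣ y :=
  fun hdy => hπ.not_unit (hco.isUnit_of_dvd' hdx hdy)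

lemma pow_cancel {π X : GaussianInt} (hπ0 : π ≠ 0) {a b : ℕ} (hab : b ≤ a)
    (hd : π ^ a ∣ π ^ b * X) : π ^ (a - b) ∣ X := by
  have e : π ^ a = π ^ b * π ^ (a - b) := by rw [← pow_add]; congr 1; omega
  rw [e] at hd
  exact (mul_dvd_mul_iff_left (pow_ne_zero b hπ0)).mp hd

lemma coprime_cancel {π m₁ X : GaussianInt} (hπ : Prime π) (hn : ¬ π ∣ m₁) {n : ℕ}
    (hd : π ^ n ∣ m₁ * X) : π ^ n ∣ X :=
  ((hπ.coprime_iff_not_dvd.mpr hn).pow_left).dvd_of_dvd_mul_left hd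
lemma key2 {π f g h : GaussianInt} (hπ : Prime π)
    (hf : Squarefree f) (hg : Squarefree g) (hh : Squarefree h)
    (hfg : IsCoprime f g) (hfh : IsCoprime f h) (hgh : IsCoprime g h)
    (k : ℕ) (hd : π ^ (2 * k) ∣ f * g ^ 2 * h ^ 3) : π ^ k ∣ g * h := by
  match k with
  | 0 => simpa using one_dvd _
  | (k' + 1) =>
    have hπ0 : π ≠ 0 := hπ.ne_zero
    have hπm : π ∣ f * g ^ 2 * h ^ 3 :=
      dvd_trans (dvd_pow_self π (by omega)) hd
    rcases (hπ.dvd_mul.mp hπm) with hfg' | hπh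
    · rcases hπ.dvd_mul.mp hfg' with hπf | hπg2
      · -- π ∣ f : contradiction
        exfalso
        have hπg : ¬ π ∣ g := not_dvd_right hπ hfg hπf
        have hπh' : ¬ π ∣ h := not_dvd_right hπ hfh hπf
        have hcop : IsCoprime (π ^ (2 * (k' + 1))) (g ^ 2 * h ^ 3) :=
          (((hπ.coprime_iff_not_dvd.mpr hπg).pow_right).mul_right
            ((hπ.coprime_iff_not_dvd.mpr hπh').pow_right)).pow_left
        have hdf : π ^ (2 * (k' + 1)) ∣ f := by
          refine hcop.dvd_of_dvd_mul_right ?_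
          rwa [← mul_assoc]
        have : π * π ∣ f := by
          refine dvd_trans ?_ hdf
          have : π * π = π ^ 2 := by ring
          rw [this]
          exact pow_dvd_pow π (by omega)
        exact hπ.not_unit (hf π this)
      · -- π ∣ g
        have hπg : π ∣ g := hπ.dvd_of_dvd_pow hπg2
        have hπf : ¬ π ∣ f := fun hc => (not_dvd_right hπ hfg hc) hπg
        have hπh' : ¬ π ∣ h := not_dvd_right hπ hgh hπg
        obtain ⟨g₁, hg1, hg1n⟩ := sq_split hg hπ hπg
        -- show k' = 0
        have hk0 : k' = 0 := by
          by_contra hk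
          have hdg2 : π ^ (2 * (k' + 1)) ∣ g ^ 2 := by
            have hcop : IsCoprime (π ^ (2 * (k' + 1))) (f * h ^ 3) :=
              (((hπ.coprime_iff_not_dvd.mpr hπf)).mul_right
                ((hπ.coprime_iff_not_dvd.mpr hπh').pow_right)).pow_left
            refine hcop.dvd_of_dvd_mul_right ?_
            have : f * g ^ 2 * h ^ 3 = g ^ 2 * (f * h ^ 3) := by ring
            rwa [this] at hd
          have h3 : π ^ 3 ∣ g ^ 2 := dvd_trans (pow_dvd_pow π (by omega)) hdg2
          rw [hg1] at h3
          have : π ^ 3 = π ^ 2 * π := by ring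
          rw [this] at h3
          have hgg : (π * g₁) ^ 2 = π ^ 2 * g₁ ^ 2 := by ring
          rw [hgg] at h3
          have := (mul_dvd_mul_iff_left (pow_ne_zero 2 hπ0)).mp h3
          exact hg1n (hπ.dvd_of_dvd_pow this)
        subst hk0
        simpa using Dvd.dvd.mul_right hπg h
    · -- π ∣ h
      have hπh : π ∣ h := hπ.dvd_of_dvd_pow hπh
      have hπf : ¬ π ∣ f := fun hc => (not_dvd_right hπ hfh hc) hπh
      have hπg : ¬ π ∣ g := fun hc => (not_dvd_right hπ hgh hc) hπh
      obtain ⟨h₁, hh1, hh1n⟩ := sq_split hh hπ hπh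
      have hk0 : k' = 0 := by
        by_contra hk
        have hdh3 : π ^ (2 * (k' + 1)) ∣ h ^ 3 := by
          have hcop : IsCoprime (π ^ (2 * (k' + 1))) (f * g ^ 2) :=
            (((hπ.coprime_iff_not_dvd.mpr hπf)).mul_right
              ((hπ.coprime_iff_not_dvd.mpr hπg).pow_right)).pow_left
          refine hcop.dvd_of_dvd_mul_right ?_
          have : f * g ^ 2 * h ^ 3 = h ^ 3 * (f * g ^ 2) := by ring
          rwa [this] at hd
        have h4 : π ^ 4 ∣ h ^ 3 := dvd_trans (pow_dvd_pow π (by omega)) hdh3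
        rw [hh1] at h4
        have e1 : (π * h₁) ^ 3 = π ^ 3 * h₁ ^ 3 := by ring
        have e2 : (π:GaussianInt) ^ 4 = π ^ 3 * π := by ring
        rw [e1, e2] at h4
        have := (mul_dvd_mul_iff_left (pow_ne_zero 3 hπ0)).mp h4
        exact hh1n (hπ.dvd_of_dvd_pow this)
      subst hk0
      simpa using Dvd.dvd.mul_left hπh g


lemma key3 {π f g h c₀ c₁ c₂ : GaussianInt} (hπ : Prime π) (hodd : IsCoprime π 2)
    (hf : Squarefree f) (hg : Squarefree g) (hh : Squarefree h)
    (hfg : IsCoprime f g) (hfh : IsCoprime f h) (hgh : IsCoprime g h)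
    (k : ℕ)
    (hB : π ^ k ∣ f * g ^ 2 * h ^ 3)
    (hA : π ^ k ∣ c₀)
    (hE : π ^ (2 * k) ∣ c₀ ^ 2 + f * g ^ 2 * h ^ 3 * c₂ ^ 2 + 2 * (f * g ^ 2 * h ^ 3) * c₁)
    (hG : π ^ (2 * k) ∣ f * g ^ 2 * h ^ 3 * (c₁ ^ 2 + 2 * c₀ * c₂) + (f * g ^ 2 * h ^ 3) ^ 2)
    (hH : π ^ (4 * k) ∣ (c₀ ^ 2 + f * g ^ 2 * h ^ 3 * (c₂ ^ 2 - 2 * c₁)) ^ 2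
      - f * g ^ 2 * h ^ 3 * (2 * c₀ * c₂ - c₁ ^ 2 - f * g ^ 2 * h ^ 3) ^ 2) :
    π ^ k ∣ g * h ^ 2 := by
  have hπ0 : π ≠ 0 := hπ.ne_zero
  rcases Nat.eq_zero_or_pos k with rfl | hk1
  · simpa using one_dvd _
  have hπm : π ∣ f * g ^ 2 * h ^ 3 := dvd_trans (dvd_pow_self π (by omega)) hB
  rcases (hπ.dvd_mul.mp hπm) with hfg' | hπh
  · rcases hπ.dvd_mul.mp hfg' with hπf | hπg2
    · -- π ∣ f : show k = 1 is forced and then contradiction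
      exfalso
      have hπg : ¬ π ∣ g := not_dvd_right hπ hfg hπf
      have hπh' : ¬ π ∣ h := not_dvd_right hπ hfh hπf
      obtain ⟨f₁, hf1, hf1n⟩ := sq_split hf hπ hπf
      set m₁ := f₁ * g ^ 2 * h ^ 3 with hm₁
      have hm1n : ¬ π ∣ m₁ := by
        intro hc
        rcases hπ.dvd_mul.mp hc with hc' | hc3
        · rcases hπ.dvd_mul.mp hc' with hc1 | hc2
          · exact hf1n hc1
          · exact hπg (hπ.dvd_of_dvd_pow hc2)
        · exact hπh' (hπ.dvd_of_dvd_pow hc3)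
      have hmeq : f * g ^ 2 * h ^ 3 = π * m₁ := by rw [hf1, hm₁]; ring
      -- k = 1
      have hkle : k = 1 := by
        by_contra hc
        have h2 : π ^ 2 ∣ π ^ 1 * m₁ := by
          rw [pow_one, ← hmeq]; exact dvd_trans (pow_dvd_pow π (by omega)) hB
        have := pow_cancel hπ0 (by omega) h2
        simpa using hm1n (by simpa using this)
      subst hkle
      obtain ⟨d0, hd0⟩ := hA
      rw [pow_one] at hd0
      -- π ∣ c₂^2 + 2 c₁
      have s1 : π ∣ c₂ ^ 2 + 2 * c₁ := by
        have e : c₀ ^ 2 + f * g ^ 2 * h ^ 3 * c₂ ^ 2 + 2 * (f * g ^ 2 * h ^ 3) * c₁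
            = π ^ 1 * (m₁ * (c₂ ^ 2 + 2 * c₁) + π * d0 ^ 2) := by
          rw [hmeq, hd0]; ring
        have := pow_cancel hπ0 (by omega) (e ▸ hE)
        rw [pow_one] at this
        have h2 : π ∣ m₁ * (c₂ ^ 2 + 2 * c₁) := (dvd_add_right (Dvd.intro _ rfl)).mp
          (by simpa [add_comm] using this)
        exact (hπ.dvd_mul.mp h2).resolve_left hm1n
      -- π ∣ c₁
      have s2 : π ∣ c₁ := by
        have e : f * g ^ 2 * h ^ 3 * (c₁ ^ 2 + 2 * c₀ * c₂) + (f * g ^ 2 * h ^ 3) ^ 2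
            = π ^ 1 * (m₁ * (c₁ ^ 2 + 2 * c₀ * c₂) + π * m₁ ^ 2) := by
          rw [hmeq]; ring
        have := pow_cancel hπ0 (by omega) (e ▸ hG)
        rw [pow_one] at this
        have h2 : π ∣ m₁ * (c₁ ^ 2 + 2 * c₀ * c₂) := (dvd_add_right (Dvd.intro _ rfl)).mp
          (by simpa [add_comm] using this)
        have h3 : π ∣ c₁ ^ 2 + 2 * c₀ * c₂ := (hπ.dvd_mul.mp h2).resolve_left hm1n
        have h4 : π ∣ c₁ ^ 2 := by
          have : π ∣ 2 * c₀ * c₂ := by rw [hd0]; exact ⟨2 * d0 * c₂, by ring⟩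
          have := (dvd_add_right this).mp (by simpa [add_comm] using h3)
          exact this
        exact hπ.dvd_of_dvd_pow h4
      have s3 : π ∣ c₂ := by
        have h4 : π ∣ c₂ ^ 2 := by
          have h2 : π ∣ 2 * c₁ := s2.mul_left 2
          exact (dvd_add_right h2).mp (by simpa [add_comm] using s1)
        exact hπ.dvd_of_dvd_pow h4
      obtain ⟨e1, he1⟩ := s2
      obtain ⟨e2, he2⟩ := s3
      -- P divisible by π^2
      have hP : π ^ 2 ∣ c₀ ^ 2 + f * g ^ 2 * h ^ 3 * (c₂ ^ 2 - 2 * c₁) := by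
        refine ⟨d0 ^ 2 + m₁ * (π * e2 ^ 2 - 2 * e1), ?_⟩
        rw [hmeq, hd0, he1, he2]; ring
      have hPP : π ^ 4 ∣ (c₀ ^ 2 + f * g ^ 2 * h ^ 3 * (c₂ ^ 2 - 2 * c₁)) ^ 2 := by
        obtain ⟨x, hx⟩ := hP
        exact ⟨x ^ 2, by rw [hx]; ring⟩
      have hMQ : π ^ 4 ∣ f * g ^ 2 * h ^ 3 * (2 * c₀ * c₂ - c₁ ^ 2 - f * g ^ 2 * h ^ 3) ^ 2 := by
        have := dvd_sub hPP (by simpa using hH)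
        simpa using this
      -- but m Q² = π³ (m₁ Q₁²) exactly
      have hQfac : f * g ^ 2 * h ^ 3 * (2 * c₀ * c₂ - c₁ ^ 2 - f * g ^ 2 * h ^ 3) ^ 2
          = π ^ 3 * (m₁ * (π * (2 * d0 * e2 - e1 ^ 2) - m₁) ^ 2) := by
        rw [hmeq, hd0, he1, he2]; ring
      rw [hQfac] at hMQ
      have hfin : π ∣ m₁ * (π * (2 * d0 * e2 - e1 ^ 2) - m₁) ^ 2 := by
        have := pow_cancel hπ0 (by omega : 3 ≤ 4) hMQ
        simpa using this
      rcases hπ.dvd_mul.mp hfin with hc | hc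
      · exact hm1n hc
      · have := hπ.dvd_of_dvd_pow hc
        have : π ∣ m₁ := by
          have h2 : π ∣ π * (2 * d0 * e2 - e1 ^ 2) := Dvd.intro _ rfl
          have := dvd_sub h2 this
          simpa using this
        exact hm1n this
    · -- π ∣ g
      have hπg : π ∣ g := hπ.dvd_of_dvd_pow hπg2
      have hπf : ¬ π ∣ f := fun hc => (not_dvd_right hπ hfg hc) hπg
      have hπh' : ¬ π ∣ h := not_dvd_right hπ hgh hπg
      obtain ⟨g₁, hg1, hg1n⟩ := sq_split hg hπ hπg
      set m₂ := f * g₁ ^ 2 * h ^ 3 with hm₂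
      have hm2n : ¬ π ∣ m₂ := by
        intro hc
        rcases hπ.dvd_mul.mp hc with hc' | hc3
        · rcases hπ.dvd_mul.mp hc' with hc1 | hc2
          · exact hπf hc1
          · exact hg1n (hπ.dvd_of_dvd_pow hc2)
        · exact hπh' (hπ.dvd_of_dvd_pow hc3)
      have hmeq : f * g ^ 2 * h ^ 3 = π ^ 2 * m₂ := by rw [hg1, hm₂]; ring
      have hkle : k ≤ 2 := by
        by_contra hc
        have h2 : π ^ 3 ∣ π ^ 2 * m₂ := by
          rw [← hmeq]; exact dvd_trans (pow_dvd_pow π (by omega)) hB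
        have := pow_cancel hπ0 (by omega) h2
        exact hm2n (by simpa using this)
      rcases (by omega : k = 1 ∨ k = 2) with rfl | rfl
      · rw [pow_one]; exact Dvd.dvd.mul_right hπg _
      · exfalso
        obtain ⟨d0, hd0⟩ := hA
        have e : c₀ ^ 2 + f * g ^ 2 * h ^ 3 * c₂ ^ 2 + 2 * (f * g ^ 2 * h ^ 3) * c₁
            = π ^ 2 * (m₂ * (c₂ ^ 2 + 2 * c₁) + π ^ 2 * d0 ^ 2) := by
          rw [hmeq, hd0]; ring
        have t1 := pow_cancel hπ0 (by omega : 2 ≤ 2 * 2) (e ▸ hE)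
        have t2 : π ^ 2 ∣ m₂ * (c₂ ^ 2 + 2 * c₁) := by
          have t1' : π ^ 2 ∣ π ^ 2 * d0 ^ 2 + m₂ * (c₂ ^ 2 + 2 * c₁) := by
            simpa [add_comm] using t1
          exact (dvd_add_right (Dvd.intro _ rfl)).mp t1'
        have s1 : π ^ 2 ∣ c₂ ^ 2 + 2 * c₁ := coprime_cancel hπ hm2n t2
        have eG : f * g ^ 2 * h ^ 3 * (c₁ ^ 2 + 2 * c₀ * c₂) + (f * g ^ 2 * h ^ 3) ^ 2
            = π ^ 2 * (m₂ * (c₁ ^ 2 + 2 * c₀ * c₂ + π ^ 2 * m₂)) := by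
          rw [hmeq]; ring
        have t3 := pow_cancel hπ0 (by omega : 2 ≤ 2 * 2) (eG ▸ hG)
        have t4 : π ^ 2 ∣ c₁ ^ 2 + 2 * c₀ * c₂ + π ^ 2 * m₂ :=
          coprime_cancel hπ hm2n (by simpa using t3)
        have t5 : π ^ 2 ∣ c₁ ^ 2 + 2 * c₀ * c₂ := (dvd_add_right (Dvd.intro _ rfl)).mp (by simpa [add_comm] using t4)
        have t6 : π ^ 2 ∣ c₁ ^ 2 := by
          have hx : π ^ 2 ∣ 2 * c₀ * c₂ := ⟨2 * d0 * c₂, by rw [hd0]; ring⟩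
          exact (dvd_add_right hx).mp (by simpa [add_comm] using t5)
        have s2 : π ∣ c₁ := hπ.dvd_of_dvd_pow (dvd_trans (dvd_pow_self π two_ne_zero) t6)
        have s3 : π ∣ c₂ := by
          have h1 : π ∣ c₂ ^ 2 + 2 * c₁ := dvd_trans (dvd_pow_self π two_ne_zero) s1
          have h2 : π ∣ 2 * c₁ := s2.mul_left 2
          exact hπ.dvd_of_dvd_pow ((dvd_add_right h2).mp (by simpa [add_comm] using h1))
        obtain ⟨e2, he2⟩ := s3
        have s4 : π ^ 2 ∣ 2 * c₁ := by
          have hx : π ^ 2 ∣ c₂ ^ 2 := ⟨e2 ^ 2, by rw [he2]; ring⟩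
          have := dvd_sub s1 hx
          simpa using this
        have s5 : π ^ 2 ∣ c₁ := (hodd.pow_left).dvd_of_dvd_mul_left s4
        obtain ⟨e1, he1⟩ := s5
        have hP : π ^ 4 ∣ c₀ ^ 2 + f * g ^ 2 * h ^ 3 * (c₂ ^ 2 - 2 * c₁) :=
          ⟨d0 ^ 2 + m₂ * (e2 ^ 2 - 2 * e1), by rw [hmeq, hd0, he1, he2]; ring⟩
        have hPP : π ^ 8 ∣ (c₀ ^ 2 + f * g ^ 2 * h ^ 3 * (c₂ ^ 2 - 2 * c₁)) ^ 2 := by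
          obtain ⟨x, hx⟩ := hP
          exact ⟨x ^ 2, by rw [hx]; ring⟩
        have hMQ : π ^ 8 ∣ f * g ^ 2 * h ^ 3 * (2 * c₀ * c₂ - c₁ ^ 2 - f * g ^ 2 * h ^ 3) ^ 2 := by
          have := dvd_sub hPP (by simpa using hH)
          simpa using this
        have hQfac : f * g ^ 2 * h ^ 3 * (2 * c₀ * c₂ - c₁ ^ 2 - f * g ^ 2 * h ^ 3) ^ 2
            = π ^ 6 * (m₂ * (π * (2 * d0 * e2) - π ^ 2 * e1 ^ 2 - m₂) ^ 2) := by
          rw [hmeq, hd0, he1, he2]; ring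
        rw [hQfac] at hMQ
        have hfin : π ∣ m₂ * (π * (2 * d0 * e2) - π ^ 2 * e1 ^ 2 - m₂) ^ 2 := by
          have := pow_cancel hπ0 (by omega : 6 ≤ 8) hMQ
          exact dvd_trans (dvd_pow_self π (by omega)) this
        rcases hπ.dvd_mul.mp hfin with hc | hc
        · exact hm2n hc
        · have h5 := hπ.dvd_of_dvd_pow hc
          have : π ∣ m₂ := by
            have h6 : π ∣ π * (2 * d0 * e2) - π ^ 2 * e1 ^ 2 :=
              ⟨2 * d0 * e2 - π * e1 ^ 2, by ring⟩
            have := dvd_sub h6 h5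
            simpa using this
          exact hm2n this
  · -- π ∣ h
    have hπh' : π ∣ h := hπ.dvd_of_dvd_pow hπh
    have hπf : ¬ π ∣ f := fun hc => (not_dvd_right hπ hfh hc) hπh'
    have hπg : ¬ π ∣ g := fun hc => (not_dvd_right hπ hgh hc) hπh'
    obtain ⟨h₁, hh1, hh1n⟩ := sq_split hh hπ hπh'
    set m₃ := f * g ^ 2 * h₁ ^ 3 with hm₃
    have hm3n : ¬ π ∣ m₃ := by
      intro hc
      rcases hπ.dvd_mul.mp hc with hc' | hc3
      · rcases hπ.dvd_mul.mp hc' with hc1 | hc2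
        · exact hπf hc1
        · exact hπg (hπ.dvd_of_dvd_pow hc2)
      · exact hh1n (hπ.dvd_of_dvd_pow hc3)
    have hmeq : f * g ^ 2 * h ^ 3 = π ^ 3 * m₃ := by rw [hh1, hm₃]; ring
    have hkle : k ≤ 3 := by
      by_contra hc
      have h2 : π ^ 4 ∣ π ^ 3 * m₃ := by
        rw [← hmeq]; exact dvd_trans (pow_dvd_pow π (by omega)) hB
      have := pow_cancel hπ0 (by omega) h2
      exact hm3n (by simpa using this)
    rcases (by omega : k = 1 ∨ k = 2 ∨ k = 3) with rfl | rfl | rfl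
    · rw [pow_one]
      exact dvd_mul_of_dvd_right (dvd_trans hπh' (dvd_pow_self h two_ne_zero)) g
    · exact dvd_mul_of_dvd_right ⟨h₁ ^ 2, by rw [hh1]; ring⟩ g
    · exfalso
      obtain ⟨d0, hd0⟩ := hA
      have e : c₀ ^ 2 + f * g ^ 2 * h ^ 3 * c₂ ^ 2 + 2 * (f * g ^ 2 * h ^ 3) * c₁
          = π ^ 3 * (m₃ * (c₂ ^ 2 + 2 * c₁) + π ^ 3 * d0 ^ 2) := by
        rw [hmeq, hd0]; ring
      have t1 := pow_cancel hπ0 (by omega : 3 ≤ 2 * 3) (e ▸ hE)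
      have t2 : π ^ 3 ∣ m₃ * (c₂ ^ 2 + 2 * c₁) := by
        have t1' : π ^ 3 ∣ π ^ 3 * d0 ^ 2 + m₃ * (c₂ ^ 2 + 2 * c₁) := by
          simpa [add_comm] using t1
        exact (dvd_add_right (Dvd.intro _ rfl)).mp t1'
      have s1 : π ^ 3 ∣ c₂ ^ 2 + 2 * c₁ := coprime_cancel hπ hm3n t2
      have eG : f * g ^ 2 * h ^ 3 * (c₁ ^ 2 + 2 * c₀ * c₂) + (f * g ^ 2 * h ^ 3) ^ 2
          = π ^ 3 * (m₃ * (c₁ ^ 2 + 2 * c₀ * c₂ + π ^ 3 * m₃)) := by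
        rw [hmeq]; ring
      have t3 := pow_cancel hπ0 (by omega : 3 ≤ 2 * 3) (eG ▸ hG)
      have t4 : π ^ 3 ∣ c₁ ^ 2 + 2 * c₀ * c₂ + π ^ 3 * m₃ :=
        coprime_cancel hπ hm3n (by simpa using t3)
      have t5 : π ^ 3 ∣ c₁ ^ 2 + 2 * c₀ * c₂ := (dvd_add_right (Dvd.intro _ rfl)).mp (by simpa [add_comm] using t4)
      have t6 : π ^ 3 ∣ c₁ ^ 2 := by
        have hx : π ^ 3 ∣ 2 * c₀ * c₂ := ⟨2 * d0 * c₂, by rw [hd0]; ring⟩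
        exact (dvd_add_right hx).mp (by simpa [add_comm] using t5)
      have s2 : π ∣ c₁ := hπ.dvd_of_dvd_pow (dvd_trans (dvd_pow_self π three_ne_zero) t6)
      obtain ⟨s, hs⟩ := id s2
      have s2' : π ∣ s := by
        have h2 : π ^ 3 ∣ π ^ 2 * s ^ 2 := by
          rw [← (by rw [hs]; ring : c₁ ^ 2 = π ^ 2 * s ^ 2)]; exact t6
        have := pow_cancel hπ0 (by omega : 2 ≤ 3) h2
        exact hπ.dvd_of_dvd_pow (by simpa using this)
      obtain ⟨e1, he1'⟩ := s2'
      have he1 : c₁ = π ^ 2 * e1 := by rw [hs, he1']; ring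
      have s3 : π ∣ c₂ := by
        have h1 : π ∣ c₂ ^ 2 + 2 * c₁ := dvd_trans (dvd_pow_self π three_ne_zero) s1
        have h2 : π ∣ 2 * c₁ := s2.mul_left 2
        exact hπ.dvd_of_dvd_pow ((dvd_add_right h2).mp (by simpa [add_comm] using h1))
      obtain ⟨e2, he2⟩ := s3
      have hP : π ^ 5 ∣ c₀ ^ 2 + f * g ^ 2 * h ^ 3 * (c₂ ^ 2 - 2 * c₁) :=
        ⟨π * d0 ^ 2 + m₃ * (e2 ^ 2 - 2 * e1), by rw [hmeq, hd0, he1, he2]; ring⟩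
      have hPP : π ^ 10 ∣ (c₀ ^ 2 + f * g ^ 2 * h ^ 3 * (c₂ ^ 2 - 2 * c₁)) ^ 2 := by
        obtain ⟨x, hx⟩ := hP
        exact ⟨x ^ 2, by rw [hx]; ring⟩
      have hMQ : π ^ 10 ∣ f * g ^ 2 * h ^ 3 * (2 * c₀ * c₂ - c₁ ^ 2 - f * g ^ 2 * h ^ 3) ^ 2 := by
        have hH' := dvd_trans (pow_dvd_pow π (by omega : 10 ≤ 4 * 3)) hH
        have := dvd_sub hPP hH'
        simpa using this
      have hQfac : f * g ^ 2 * h ^ 3 * (2 * c₀ * c₂ - c₁ ^ 2 - f * g ^ 2 * h ^ 3) ^ 2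
          = π ^ 9 * (m₃ * (π * (2 * d0 * e2) - π * e1 ^ 2 - m₃) ^ 2) := by
        rw [hmeq, hd0, he1, he2]; ring
      rw [hQfac] at hMQ
      have hfin : π ∣ m₃ * (π * (2 * d0 * e2) - π * e1 ^ 2 - m₃) ^ 2 := by
        have := pow_cancel hπ0 (by omega : 9 ≤ 10) hMQ
        simpa using this
      rcases hπ.dvd_mul.mp hfin with hc | hc
      · exact hm3n hc
      · have h5 := hπ.dvd_of_dvd_pow hc
        have : π ∣ m₃ := by
          have h6 : π ∣ π * (2 * d0 * e2) - π * e1 ^ 2 := ⟨2 * d0 * e2 - e1 ^ 2, by ring⟩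
          have := dvd_sub h6 h5
          simpa using this
        exact hm3n this


lemma minpolyEq (K : Type*) {N : Type*} [Field K] [Field N]
    [Algebra GaussianInt K] [IsFractionRing GaussianInt K]
    [Algebra K N] [Algebra GaussianInt N] [IsScalarTower GaussianInt K N]
    [FiniteDimensional K N]
    (hdim : Module.finrank K N = 4) (m : GaussianInt) (α : N)
    (hα : α ^ 4 = algebraMap GaussianInt N m)
    (hgen : Algebra.adjoin K {α} = ⊤) :
    minpoly K α = X ^ 4 - C (algebraMap GaussianInt K m) := by
  have hint : IsIntegral K α := IsIntegral.of_finite K α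
  have htop : IntermediateField.adjoin K {α} = ⊤ :=
    IntermediateField.adjoin_eq_top_of_algebra K {α} hgen
  have hP0 : aeval α (X ^ 4 - C (algebraMap GaussianInt K m) : K[X]) = 0 := by
    simp [hα, ← IsScalarTower.algebraMap_apply]
  have hPm : (X ^ 4 - C (algebraMap GaussianInt K m) : K[X]).Monic :=
    monic_X_pow_sub_C _ (by norm_num)
  have hdeg : (minpoly K α).natDegree = 4 := by
    have := IntermediateField.adjoin.finrank hint
    rw [htop, IntermediateField.finrank_top', hdim] at this
    omega
  have hdvd : minpoly K α ∣ X ^ 4 - C (algebraMap GaussianInt K m) :=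
    minpoly.dvd K α hP0
  exact (Polynomial.eq_of_monic_of_dvd_of_natDegree_le (minpoly.monic hint) hPm hdvd
    (by rw [hdeg, natDegree_X_pow_sub_C])).symm

set_option linter.unusedVariables false in
lemma coordLemma {K N : Type*} [Field K] [Field N]
    [Algebra GaussianInt K] [IsFractionRing GaussianInt K]
    [Algebra K N] [Algebra GaussianInt N] [IsScalarTower GaussianInt K N]
    [FiniteDimensional K N]
    (hdim : Module.finrank K N = 4) (α : N) (hint : IsIntegral K α)
    (hmin : (minpoly K α).natDegree = 4)
    (hgen : Algebra.adjoin K {α} = ⊤)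
    (r0 r1 r2 r3 : GaussianInt)
    (hrel : algebraMap GaussianInt N r0 + algebraMap GaussianInt N r1 * α
      + algebraMap GaussianInt N r2 * α ^ 2 + algebraMap GaussianInt N r3 * α ^ 3 = 0) :
    r0 = 0 ∧ r1 = 0 ∧ r2 = 0 ∧ r3 = 0 := by
  classical
  set pb : PowerBasis K N := (IntermediateField.adjoin.powerBasis hint).map
    ((IntermediateField.equivOfEq (IntermediateField.adjoin_eq_top_of_algebra K {α} hgen)).trans
      IntermediateField.topEquiv) with hpb
  have hgen' : pb.gen = α := by simp [hpb]
  have hdim' : pb.dim = 4 := by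
    have : pb.dim = (minpoly K α).natDegree := by simp [hpb]
    omega
  set B : Module.Basis (Fin 4) K N := pb.basis.reindex (finCongr hdim') with hB
  have hBi : ∀ i : Fin 4, B i = α ^ (i : ℕ) := by
    intro i
    rw [hB, Module.Basis.reindex_apply, pb.basis_eq_pow, hgen']
    congr 1
  have hli := B.linearIndependent
  set gfun : Fin 4 → K := ![algebraMap GaussianInt K r0, algebraMap GaussianInt K r1,
    algebraMap GaussianInt K r2, algebraMap GaussianInt K r3] with hg
  have hsum : ∑ i, gfun i • B i = 0 := by
    have e2 : ((2:Fin 4):ℕ) = 2 := rfl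
    have e3 : ((3:Fin 4):ℕ) = 3 := rfl
    rw [Fin.sum_univ_four]
    simp only [hBi, hg, Matrix.cons_val_zero, Matrix.cons_val_one, Matrix.head_cons,
      Matrix.cons_val_two, Matrix.cons_val_three, Matrix.tail_cons, Fin.val_zero, Fin.val_one,
      e2, e3, Algebra.smul_def, ← IsScalarTower.algebraMap_apply, pow_zero, pow_one]
    rw [← hrel]
    ring
  have hz := Fintype.linearIndependent_iff.mp hli gfun hsum
  have inj := IsFractionRing.injective GaussianInt K
  refine ⟨?_, ?_, ?_, ?_⟩ <;>
    [have := hz 0; have := hz 1; have := hz 2; have := hz 3] <;>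
    · simp [hg] at this
      exact inj (by simpa using this)

lemma dvd_of_integral (K N : Type*) [Field K] [Field N]
    [Algebra GaussianInt K] [IsFractionRing GaussianInt K]
    [Algebra K N] [Algebra GaussianInt N] [IsScalarTower GaussianInt K N]
    (e r : GaussianInt) (W : N) (he : e ≠ 0)
    (hW : IsIntegral GaussianInt W)
    (heq : algebraMap GaussianInt N e * W = algebraMap GaussianInt N r) :
    e ∣ r := by
  have injK := IsFractionRing.injective GaussianInt K
  have he' : algebraMap GaussianInt K e ≠ 0 := fun h => he (injK (by simpa using h))
  have hWeq : W = algebraMap K N (algebraMap GaussianInt K r / algebraMap GaussianInt K e) := by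
    have hne : algebraMap K N (algebraMap GaussianInt K e) ≠ 0 := by
      simpa using (algebraMap K N).injective.ne he'
    rw [map_div₀]
    rw [eq_div_iff hne, mul_comm]
    rw [IsScalarTower.algebraMap_apply GaussianInt K N,
      IsScalarTower.algebraMap_apply GaussianInt K N] at heq
    exact heq
  have hint2 : IsIntegral GaussianInt (algebraMap GaussianInt K r / algebraMap GaussianInt K e) := by
    rw [hWeq] at hW
    exact (isIntegral_algebraMap_iff (algebraMap K N).injective).mp hW
  obtain ⟨y, hy⟩ := IsIntegrallyClosed.isIntegral_iff.mp hint2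
  refine ⟨y, injK ?_⟩
  rw [map_mul, hy]
  field_simp

lemma exists_sigma (K N : Type*) [Field K] [Field N]
    [Algebra GaussianInt K] [IsFractionRing GaussianInt K]
    [Algebra K N] [Algebra GaussianInt N] [IsScalarTower GaussianInt K N]
    [FiniteDimensional K N]
    (m : GaussianInt) (α : N)
    (hα : α ^ 4 = algebraMap GaussianInt N m)
    (hminp : minpoly K α = X ^ 4 - C (algebraMap GaussianInt K m))
    (hgen : Algebra.adjoin K {α} = ⊤) :
    ∃ σ : N →ₐ[GaussianInt] N,
      σ α = algebraMap GaussianInt N Zsqrtd.sqrtd * α := by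
  have hint : IsIntegral K α := IsIntegral.of_finite K α
  set pb : PowerBasis K N := (IntermediateField.adjoin.powerBasis hint).map
    ((IntermediateField.equivOfEq (IntermediateField.adjoin_eq_top_of_algebra K {α} hgen)).trans
      IntermediateField.topEquiv) with hpb
  have hgen' : pb.gen = α := by simp [hpb]
  have hroot : aeval (algebraMap GaussianInt N Zsqrtd.sqrtd * α) (minpoly K pb.gen) = 0 := by
    rw [hgen', hminp]
    have h4 : (algebraMap GaussianInt N Zsqrtd.sqrtd) ^ 4 = 1 := by
      rw [← map_pow]
      have hs : (Zsqrtd.sqrtd : GaussianInt) ^ 4 = 1 := by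
        have hq := sqrtd_mul_self'
        have he : (Zsqrtd.sqrtd : GaussianInt) ^ 4
            = (Zsqrtd.sqrtd * Zsqrtd.sqrtd) * (Zsqrtd.sqrtd * Zsqrtd.sqrtd) := by ring
        rw [he, hq]; ring
      rw [hs, map_one]
    simp only [map_sub, map_pow, aeval_X, aeval_C, mul_pow, h4, one_mul, hα]
    rw [← IsScalarTower.algebraMap_apply]
    ring
  refine ⟨(pb.lift (algebraMap GaussianInt N Zsqrtd.sqrtd * α) hroot).restrictScalars
    GaussianInt, ?_⟩
  have hlg := pb.lift_gen (algebraMap GaussianInt N Zsqrtd.sqrtd * α) hroot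
  rw [hgen'] at hlg
  simpa using hlg

end QuarticKummerAux

set_option maxHeartbeats 1600000

/-- For a normalised integral basis of `O_N` over `ℤ[i]`: `gh ∣ d₂` and `gh² ∣ d₃`;
moreover for every prime `π` of `ℤ[i]` coprime to `1+i`,
`ν_π(d₂) = ν_π(gh)` and `ν_π(d₃) = ν_π(gh²)`. -/
theorem quartic_kummer_odd_parts_of_d2_d3
(f g h : GaussianInt) (hf : Squarefree f) (hg : Squarefree g) (hh : Squarefree h)
    (hfg : IsCoprime f g) (hfh : IsCoprime f h) (hgh : IsCoprime g h)
    (K N : Type*) [Field K] [Field N]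
    [Algebra GaussianInt K] [IsFractionRing GaussianInt K]
    [Algebra K N] [Algebra GaussianInt N] [IsScalarTower GaussianInt K N]
    [FiniteDimensional K N] (hdim : Module.finrank K N = 4)
    (α : N) (hα : α ^ 4 = algebraMap GaussianInt N (f * g ^ 2 * h ^ 3))
    (hgen : Algebra.adjoin K {α} = ⊤)
    (a₀ b₀ b₁ c₀ c₁ c₂ d₁ d₂ d₃ : GaussianInt)
    (bN : Module.Basis (Fin 4) GaussianInt (integralClosure GaussianInt N))
    (hb0 : (bN 0 : N) = 1)
    (hb1 : algebraMap GaussianInt N d₁ * (bN 1 : N) = algebraMap GaussianInt N a₀ + α)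
    (hb2 : algebraMap GaussianInt N d₂ * (bN 2 : N) =
      algebraMap GaussianInt N b₀ + algebraMap GaussianInt N b₁ * α + α ^ 2)
    (hb3 : algebraMap GaussianInt N d₃ * (bN 3 : N) =
      algebraMap GaussianInt N c₀ + algebraMap GaussianInt N c₁ * α +
        algebraMap GaussianInt N c₂ * α ^ 2 + α ^ 3) :
    g * h ∣ d₂ ∧ g * h ^ 2 ∣ d₃ ∧
    ∀ π : GaussianInt, Prime π → IsCoprime π (1 + Zsqrtd.sqrtd) →
      (∀ k : ℕ, π ^ k ∣ d₂ ↔ π ^ k ∣ g * h) ∧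
      (∀ k : ℕ, π ^ k ∣ d₃ ↔ π ^ k ∣ g * h ^ 2) := by
  classical
  have injK := IsFractionRing.injective GaussianInt K
  have hint : IsIntegral K α := IsIntegral.of_finite K α
  have hminp := QuarticKummerAux.minpolyEq K hdim (f * g ^ 2 * h ^ 3) α hα hgen
  have hmdeg : (minpoly K α).natDegree = 4 := by
    rw [hminp]; exact Polynomial.natDegree_X_pow_sub_C
  have CL : ∀ r0 r1 r2 r3 : GaussianInt,
      (algebraMap GaussianInt N r0 + algebraMap GaussianInt N r1 * α + algebraMap GaussianInt N r2 * α ^ 2 + algebraMap GaussianInt N r3 * α ^ 3 = 0) →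
      r0 = 0 ∧ r1 = 0 ∧ r2 = 0 ∧ r3 = 0 :=
    fun r0 r1 r2 r3 hr => QuarticKummerAux.coordLemma hdim α hint hmdeg hgen r0 r1 r2 r3 hr
  have hf0 : f ≠ 0 := hf.ne_zero
  have hg0 : g ≠ 0 := hg.ne_zero
  have hh0 : h ≠ 0 := hh.ne_zero
  have hα' : α ^ 4 = algebraMap GaussianInt N f * (algebraMap GaussianInt N g) ^ 2 * (algebraMap GaussianInt N h) ^ 3 := by
    rw [hα, map_mul, map_mul, map_pow, map_pow]
  -- d's are nonzero
  have hd10 : d₁ ≠ 0 := by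
    intro h0
    rw [h0, map_zero, zero_mul] at hb1
    have h1 : algebraMap GaussianInt N a₀ + algebraMap GaussianInt N (1:GaussianInt) * α + algebraMap GaussianInt N (0:GaussianInt) * α ^ 2
        + algebraMap GaussianInt N (0:GaussianInt) * α ^ 3 = 0 := by
      rw [map_one, map_zero]
      linear_combination -hb1
    exact one_ne_zero ((CL _ _ _ _ h1).2.1)
  have hd20 : d₂ ≠ 0 := by
    intro h0
    rw [h0, map_zero, zero_mul] at hb2
    have h1 : algebraMap GaussianInt N b₀ + algebraMap GaussianInt N b₁ * α + algebraMap GaussianInt N (1:GaussianInt) * α ^ 2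
        + algebraMap GaussianInt N (0:GaussianInt) * α ^ 3 = 0 := by
      rw [map_one, map_zero]
      linear_combination -hb2
    exact one_ne_zero ((CL _ _ _ _ h1).2.2.1)
  have hd30 : d₃ ≠ 0 := by
    intro h0
    rw [h0, map_zero, zero_mul] at hb3
    have h1 : algebraMap GaussianInt N c₀ + algebraMap GaussianInt N c₁ * α + algebraMap GaussianInt N c₂ * α ^ 2
        + algebraMap GaussianInt N (1:GaussianInt) * α ^ 3 = 0 := by
      rw [map_one]
      linear_combination -hb3
    exact one_ne_zero ((CL _ _ _ _ h1).2.2.2)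
  -- Part 1: g*h ∣ d₂
  have hgh2 : g * h ∣ d₂ := by
    have hGH0 : algebraMap GaussianInt K (g * h) ≠ 0 := fun hc =>
      (mul_ne_zero hg0 hh0) (injK (by simpa using hc))
    set u : N := algebraMap K N (algebraMap GaussianInt K (g * h))⁻¹ with hudef
    have hu : algebraMap GaussianInt N g * algebraMap GaussianInt N h * u = 1 := by
      rw [hudef, ← map_mul, IsScalarTower.algebraMap_apply GaussianInt K N, ← map_mul,
        mul_inv_cancel₀ hGH0, map_one]
    have hu1 : (algebraMap GaussianInt N g * algebraMap GaussianInt N h * u) ^ 2 = 1 := by rw [hu]; norm_num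
    have hy2 : (u * α ^ 2) ^ 2 = algebraMap GaussianInt N (f * h) := by
      rw [map_mul]
      linear_combination u ^ 2 * hα' + (algebraMap GaussianInt N f * algebraMap GaussianInt N h) * hu1
    have hyint : IsIntegral GaussianInt (u * α ^ 2) :=
      ⟨Polynomial.X ^ 2 - Polynomial.C (f * h),
        Polynomial.monic_X_pow_sub_C _ two_ne_zero, by simp [hy2]⟩
    set Y : integralClosure GaussianInt N := ⟨u * α ^ 2, hyint⟩ with hYdef
    have hsum4 := bN.sum_repr Y
    rw [Fin.sum_univ_four] at hsum4
    have hcoe := congrArg (Subtype.val) hsum4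
    simp only [AddMemClass.coe_add, SetLike.val_smul] at hcoe
    simp only [Algebra.smul_def] at hcoe
    have hYval : (Y : N) = u * α ^ 2 := rfl
    have hrepr : u * α ^ 2 = algebraMap GaussianInt N (bN.repr Y 0) * (bN 0 : N) + algebraMap GaussianInt N (bN.repr Y 1) * (bN 1 : N)
        + algebraMap GaussianInt N (bN.repr Y 2) * (bN 2 : N) + algebraMap GaussianInt N (bN.repr Y 3) * (bN 3 : N) := by
      exact hcoe.symm
    have keyEq : algebraMap GaussianInt N (g*h*(bN.repr Y 0*(d₁*d₂*d₃) + bN.repr Y 1*(d₂*d₃)*a₀ + bN.repr Y 2*(d₁*d₃)*b₀ + bN.repr Y 3*(d₁*d₂)*c₀))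
        + algebraMap GaussianInt N (g*h*(bN.repr Y 1*(d₂*d₃) + bN.repr Y 2*(d₁*d₃)*b₁ + bN.repr Y 3*(d₁*d₂)*c₁)) * α
        + algebraMap GaussianInt N (g*h*(bN.repr Y 2*(d₁*d₃) + bN.repr Y 3*(d₁*d₂)*c₂) - d₁*d₂*d₃) * α ^ 2
        + algebraMap GaussianInt N (g*h*(bN.repr Y 3*(d₁*d₂))) * α ^ 3 = 0 := by
      simp only [map_mul, map_add, map_sub]
      linear_combination (-(algebraMap GaussianInt N g * algebraMap GaussianInt N h * algebraMap GaussianInt N d₁ * algebraMap GaussianInt N d₂ * algebraMap GaussianInt N d₃)) * hrepr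
        + (-(algebraMap GaussianInt N g * algebraMap GaussianInt N h * algebraMap GaussianInt N (bN.repr Y 0) * algebraMap GaussianInt N d₁ * algebraMap GaussianInt N d₂ * algebraMap GaussianInt N d₃)) * hb0
        + (-(algebraMap GaussianInt N g * algebraMap GaussianInt N h * algebraMap GaussianInt N (bN.repr Y 1) * algebraMap GaussianInt N d₂ * algebraMap GaussianInt N d₃)) * hb1
        + (-(algebraMap GaussianInt N g * algebraMap GaussianInt N h * algebraMap GaussianInt N (bN.repr Y 2) * algebraMap GaussianInt N d₁ * algebraMap GaussianInt N d₃)) * hb2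
        + (-(algebraMap GaussianInt N g * algebraMap GaussianInt N h * algebraMap GaussianInt N (bN.repr Y 3) * algebraMap GaussianInt N d₁ * algebraMap GaussianInt N d₂)) * hb3
        + (algebraMap GaussianInt N d₁ * algebraMap GaussianInt N d₂ * algebraMap GaussianInt N d₃ * α ^ 2) * hu
    obtain ⟨-, -, hR2, hR3⟩ := CL _ _ _ _ keyEq
    have hE3 : bN.repr Y 3 = 0 := by
      simpa [mul_eq_zero, hg0, hh0, hd10, hd20] using hR3
    have hcan : d₁ * d₃ * d₂ = d₁ * d₃ * (g * h * bN.repr Y 2) := by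
      linear_combination -hR2 + (g * h * d₁ * d₂ * c₂) * hE3
    exact ⟨bN.repr Y 2, mul_left_cancel₀ (mul_ne_zero hd10 hd30) hcan⟩
  -- Part 1': g*h^2 ∣ d₃
  have hgh3 : g * h ^ 2 ∣ d₃ := by
    have hGH0 : algebraMap GaussianInt K (g * h ^ 2) ≠ 0 := fun hc =>
      (mul_ne_zero hg0 (pow_ne_zero 2 hh0)) (injK (by simpa using hc))
    set u : N := algebraMap K N (algebraMap GaussianInt K (g * h ^ 2))⁻¹ with hudef
    have hu : algebraMap GaussianInt N g * (algebraMap GaussianInt N h) ^ 2 * u = 1 := by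
      rw [hudef, ← map_pow, ← map_mul, IsScalarTower.algebraMap_apply GaussianInt K N, ← map_mul,
        mul_inv_cancel₀ hGH0, map_one]
    have hu1 : (algebraMap GaussianInt N g * (algebraMap GaussianInt N h) ^ 2 * u) ^ 4 = 1 := by rw [hu]; norm_num
    have hcube : (α ^ 4) ^ 3 = (algebraMap GaussianInt N f * (algebraMap GaussianInt N g) ^ 2 * (algebraMap GaussianInt N h) ^ 3) ^ 3 := by rw [hα']
    have hy2 : (u * α ^ 3) ^ 4 = algebraMap GaussianInt N (f^3 * g^2 * h) := by
      rw [map_mul, map_mul, map_pow, map_pow]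
      linear_combination u ^ 4 * hcube + ((algebraMap GaussianInt N f) ^ 3 * (algebraMap GaussianInt N g) ^ 2 * algebraMap GaussianInt N h) * hu1
    have hyint : IsIntegral GaussianInt (u * α ^ 3) :=
      ⟨Polynomial.X ^ 4 - Polynomial.C (f ^ 3 * g ^ 2 * h),
        Polynomial.monic_X_pow_sub_C _ (by norm_num), by simp [hy2]⟩
    set Y : integralClosure GaussianInt N := ⟨u * α ^ 3, hyint⟩ with hYdef
    have hsum4 := bN.sum_repr Y
    rw [Fin.sum_univ_four] at hsum4
    have hcoe := congrArg (Subtype.val) hsum4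
    simp only [AddMemClass.coe_add, SetLike.val_smul] at hcoe
    simp only [Algebra.smul_def] at hcoe
    have hYval : (Y : N) = u * α ^ 3 := rfl
    have hrepr : u * α ^ 3 = algebraMap GaussianInt N (bN.repr Y 0) * (bN 0 : N) + algebraMap GaussianInt N (bN.repr Y 1) * (bN 1 : N)
        + algebraMap GaussianInt N (bN.repr Y 2) * (bN 2 : N) + algebraMap GaussianInt N (bN.repr Y 3) * (bN 3 : N) := by
      exact hcoe.symm
    have keyEq : algebraMap GaussianInt N (g*h^2*(bN.repr Y 0*(d₁*d₂*d₃) + bN.repr Y 1*(d₂*d₃)*a₀ + bN.repr Y 2*(d₁*d₃)*b₀ + bN.repr Y 3*(d₁*d₂)*c₀))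
        + algebraMap GaussianInt N (g*h^2*(bN.repr Y 1*(d₂*d₃) + bN.repr Y 2*(d₁*d₃)*b₁ + bN.repr Y 3*(d₁*d₂)*c₁)) * α
        + algebraMap GaussianInt N (g*h^2*(bN.repr Y 2*(d₁*d₃) + bN.repr Y 3*(d₁*d₂)*c₂)) * α ^ 2
        + algebraMap GaussianInt N (g*h^2*(bN.repr Y 3*(d₁*d₂)) - d₁*d₂*d₃) * α ^ 3 = 0 := by
      simp only [map_mul, map_add, map_sub, map_pow]
      linear_combination (-(algebraMap GaussianInt N g * (algebraMap GaussianInt N h) ^ 2 * algebraMap GaussianInt N d₁ * algebraMap GaussianInt N d₂ * algebraMap GaussianInt N d₃)) * hrepr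
        + (-(algebraMap GaussianInt N g * (algebraMap GaussianInt N h) ^ 2 * algebraMap GaussianInt N (bN.repr Y 0) * algebraMap GaussianInt N d₁ * algebraMap GaussianInt N d₂ * algebraMap GaussianInt N d₃)) * hb0
        + (-(algebraMap GaussianInt N g * (algebraMap GaussianInt N h) ^ 2 * algebraMap GaussianInt N (bN.repr Y 1) * algebraMap GaussianInt N d₂ * algebraMap GaussianInt N d₃)) * hb1
        + (-(algebraMap GaussianInt N g * (algebraMap GaussianInt N h) ^ 2 * algebraMap GaussianInt N (bN.repr Y 2) * algebraMap GaussianInt N d₁ * algebraMap GaussianInt N d₃)) * hb2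
        + (-(algebraMap GaussianInt N g * (algebraMap GaussianInt N h) ^ 2 * algebraMap GaussianInt N (bN.repr Y 3) * algebraMap GaussianInt N d₁ * algebraMap GaussianInt N d₂)) * hb3
        + (algebraMap GaussianInt N d₁ * algebraMap GaussianInt N d₂ * algebraMap GaussianInt N d₃ * α ^ 3) * hu
    obtain ⟨-, -, -, hR3⟩ := CL _ _ _ _ keyEq
    have hcan : d₁ * d₂ * d₃ = d₁ * d₂ * (g * h ^ 2 * bN.repr Y 3) := by
      linear_combination -hR3
    exact ⟨bN.repr Y 3, mul_left_cancel₀ (mul_ne_zero hd10 hd20) hcan⟩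
  refine ⟨hgh2, hgh3, ?_⟩
  intro π hπ hπcop
  have hπ0 : π ≠ 0 := hπ.ne_zero
  have hJ2 : (algebraMap GaussianInt N Zsqrtd.sqrtd) ^ 2 = -1 := by
    have hs : (Zsqrtd.sqrtd : GaussianInt) ^ 2 = -1 := by
      rw [pow_two]; exact QuarticKummerAux.sqrtd_mul_self'
    rw [← map_pow, hs, map_neg, map_one]
  have hc2 : IsCoprime π 2 := by
    have hiu : IsCoprime π (-Zsqrtd.sqrtd : GaussianInt) := by
      refine ⟨0, Zsqrtd.sqrtd, ?_⟩
      have := QuarticKummerAux.sqrtd_mul_self'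
      linear_combination -this
    have h2eq : (2 : GaussianInt) = -Zsqrtd.sqrtd * (1 + Zsqrtd.sqrtd) ^ 2 := by
      have := QuarticKummerAux.sqrtd_mul_self'
      linear_combination (Zsqrtd.sqrtd + 2) * this
    rw [h2eq]
    exact hiu.mul_right (hπcop.pow_right)
  have hπ4 : IsCoprime π 4 := by
    have h4 : (4 : GaussianInt) = 2 * 2 := by norm_num
    rw [h4]
    exact hc2.mul_right hc2
  obtain ⟨σ, hσα⟩ := QuarticKummerAux.exists_sigma K N (f * g ^ 2 * h ^ 3) α hα hminp hgen
  have hσφ : ∀ r : GaussianInt, σ (algebraMap GaussianInt N r) = algebraMap GaussianInt N r := fun r => σ.commutes r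
  -- claim for d₂
  have claim2 : ∀ k : ℕ, π ^ k ∣ d₂ → π ^ k ∣ g * h := by
    intro k hk
    obtain ⟨t, ht⟩ := hk
    have hv2 : IsIntegral GaussianInt ((bN 2 : N)) := (bN 2).2
    have hW0i : IsIntegral GaussianInt (algebraMap GaussianInt N t * (bN 2 : N)) :=
      (isIntegral_algebraMap).mul hv2
    have hW1i : IsIntegral GaussianInt (algebraMap GaussianInt N t * σ (bN 2 : N)) :=
      (isIntegral_algebraMap).mul (hv2.map σ)
    have hW2i : IsIntegral GaussianInt (algebraMap GaussianInt N t * σ (σ (bN 2 : N))) :=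
      (isIntegral_algebraMap).mul ((hv2.map σ).map σ)
    have hW3i : IsIntegral GaussianInt (algebraMap GaussianInt N t * σ (σ (σ (bN 2 : N)))) :=
      (isIntegral_algebraMap).mul (((hv2.map σ).map σ).map σ)
    have H0 : (algebraMap GaussianInt N π) ^ k * (algebraMap GaussianInt N t * (bN 2 : N))
        = algebraMap GaussianInt N b₀ + algebraMap GaussianInt N b₁ * α + α ^ 2 := by
      rw [← mul_assoc, ← map_pow, ← map_mul, ← ht]; exact hb2
    have H1raw := congrArg σ H0
    simp only [map_mul, map_add, map_pow, hσφ, hσα] at H1raw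
    have H1 : (algebraMap GaussianInt N π) ^ k * (algebraMap GaussianInt N t * σ (bN 2 : N))
        = algebraMap GaussianInt N b₀ + algebraMap GaussianInt N b₁ * (algebraMap GaussianInt N Zsqrtd.sqrtd * α) - α ^ 2 := by
      linear_combination H1raw + α ^ 2 * hJ2
    have H2raw := congrArg σ H1
    simp only [map_mul, map_add, map_sub, map_pow, hσφ, hσα] at H2raw
    have H2 : (algebraMap GaussianInt N π) ^ k * (algebraMap GaussianInt N t * σ (σ (bN 2 : N)))
        = algebraMap GaussianInt N b₀ - algebraMap GaussianInt N b₁ * α + α ^ 2 := by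
      linear_combination H2raw + (α * (algebraMap GaussianInt N b₁) - α ^ 2) * hJ2
    have H3raw := congrArg σ H2
    simp only [map_mul, map_add, map_sub, map_pow, hσφ, hσα] at H3raw
    have H3 : (algebraMap GaussianInt N π) ^ k * (algebraMap GaussianInt N t * σ (σ (σ (bN 2 : N))))
        = algebraMap GaussianInt N b₀ - algebraMap GaussianInt N b₁ * (algebraMap GaussianInt N Zsqrtd.sqrtd * α) - α ^ 2 := by
      linear_combination H3raw + α ^ 2 * hJ2
    -- trace-type relation 1
    have hS1 : algebraMap GaussianInt N (π ^ k) * ((algebraMap GaussianInt N t * (bN 2 : N)) + (algebraMap GaussianInt N t * σ (bN 2 : N))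
        + (algebraMap GaussianInt N t * σ (σ (bN 2 : N))) + (algebraMap GaussianInt N t * σ (σ (σ (bN 2 : N)))))
        = algebraMap GaussianInt N (4 * b₀) := by
      simp only [map_pow, map_mul, map_ofNat]
      linear_combination H0 + H1 + H2 + H3
    have hdvd1 : π ^ k ∣ 4 * b₀ :=
      QuarticKummerAux.dvd_of_integral K N _ _ _ (pow_ne_zero k hπ0)
        (((hW0i.add hW1i).add hW2i).add hW3i) hS1
    have hb0d : π ^ k ∣ b₀ := (hπ4.pow_left).dvd_of_dvd_mul_left hdvd1
    -- trace-type relation 2 (squares)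
    have Hsq0 : ((algebraMap GaussianInt N π) ^ k * (algebraMap GaussianInt N t * (bN 2 : N))) ^ 2
        = (algebraMap GaussianInt N b₀ + algebraMap GaussianInt N b₁ * α + α ^ 2) ^ 2 := by rw [H0]
    have Hsq1 : ((algebraMap GaussianInt N π) ^ k * (algebraMap GaussianInt N t * σ (bN 2 : N))) ^ 2
        = (algebraMap GaussianInt N b₀ + algebraMap GaussianInt N b₁ * (algebraMap GaussianInt N Zsqrtd.sqrtd * α) - α ^ 2) ^ 2 := by rw [H1]
    have Hsq2 : ((algebraMap GaussianInt N π) ^ k * (algebraMap GaussianInt N t * σ (σ (bN 2 : N)))) ^ 2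
        = (algebraMap GaussianInt N b₀ - algebraMap GaussianInt N b₁ * α + α ^ 2) ^ 2 := by rw [H2]
    have Hsq3 : ((algebraMap GaussianInt N π) ^ k * (algebraMap GaussianInt N t * σ (σ (σ (bN 2 : N))))) ^ 2
        = (algebraMap GaussianInt N b₀ - algebraMap GaussianInt N b₁ * (algebraMap GaussianInt N Zsqrtd.sqrtd * α) - α ^ 2) ^ 2 := by rw [H3]
    have hS2 : algebraMap GaussianInt N ((π ^ k) ^ 2) * ((algebraMap GaussianInt N t * (bN 2 : N)) ^ 2 + (algebraMap GaussianInt N t * σ (bN 2 : N)) ^ 2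
        + (algebraMap GaussianInt N t * σ (σ (bN 2 : N))) ^ 2 + (algebraMap GaussianInt N t * σ (σ (σ (bN 2 : N)))) ^ 2)
        = algebraMap GaussianInt N (4 * (b₀ ^ 2 + f * g ^ 2 * h ^ 3)) := by
      simp only [map_pow, map_mul, map_add, map_ofNat]
      linear_combination Hsq0 + Hsq1 + Hsq2 + Hsq3 + 2 * (algebraMap GaussianInt N b₁) ^ 2 * α ^ 2 * hJ2 + 4 * hα'
    have hdvd2' : (π ^ k) ^ 2 ∣ 4 * (b₀ ^ 2 + f * g ^ 2 * h ^ 3) :=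
      QuarticKummerAux.dvd_of_integral K N _ _ _ (pow_ne_zero 2 (pow_ne_zero k hπ0))
        ((((hW0i.pow 2).add (hW1i.pow 2)).add (hW2i.pow 2)).add (hW3i.pow 2)) hS2
    have hdvd2 : (π ^ k) ^ 2 ∣ b₀ ^ 2 + f * g ^ 2 * h ^ 3 :=
      ((hπ4.pow_left).pow_left).dvd_of_dvd_mul_left hdvd2'
    have hmdvd : π ^ (2 * k) ∣ f * g ^ 2 * h ^ 3 := by
      obtain ⟨x, hx⟩ := hb0d
      have hb2' : (π ^ k) ^ 2 ∣ b₀ ^ 2 := ⟨x ^ 2, by rw [hx]; ring⟩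
      have hsub := dvd_sub hdvd2 hb2'
      rw [show 2 * k = k * 2 by ring, pow_mul]
      simpa using hsub
    exact QuarticKummerAux.key2 hπ hf hg hh hfg hfh hgh k hmdvd
  -- claim for d₃
  have claim3 : ∀ k : ℕ, π ^ k ∣ d₃ → π ^ k ∣ g * h ^ 2 := by
    intro k hk
    obtain ⟨t, ht⟩ := hk
    have hv3 : IsIntegral GaussianInt ((bN 3 : N)) := (bN 3).2
    have hαi : IsIntegral GaussianInt α :=
      ⟨Polynomial.X ^ 4 - Polynomial.C (f * g ^ 2 * h ^ 3),
        Polynomial.monic_X_pow_sub_C _ (by norm_num), by simp [hα]⟩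
    have hJi : IsIntegral GaussianInt (algebraMap GaussianInt N Zsqrtd.sqrtd) := isIntegral_algebraMap
    have hW0i : IsIntegral GaussianInt (algebraMap GaussianInt N t * (bN 3 : N)) :=
      (isIntegral_algebraMap).mul hv3
    have hW1i : IsIntegral GaussianInt (algebraMap GaussianInt N t * σ (bN 3 : N)) :=
      (isIntegral_algebraMap).mul (hv3.map σ)
    have hW2i : IsIntegral GaussianInt (algebraMap GaussianInt N t * σ (σ (bN 3 : N))) :=
      (isIntegral_algebraMap).mul ((hv3.map σ).map σ)
    have hW3i : IsIntegral GaussianInt (algebraMap GaussianInt N t * σ (σ (σ (bN 3 : N)))) :=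
      (isIntegral_algebraMap).mul (((hv3.map σ).map σ).map σ)
    have G0 : (algebraMap GaussianInt N π) ^ k * (algebraMap GaussianInt N t * (bN 3 : N))
        = algebraMap GaussianInt N c₀ + algebraMap GaussianInt N c₁ * α + algebraMap GaussianInt N c₂ * α ^ 2 + α ^ 3 := by
      rw [← mul_assoc, ← map_pow, ← map_mul, ← ht]; exact hb3
    have G1raw := congrArg σ G0
    simp only [map_mul, map_add, map_pow, hσφ, hσα] at G1raw
    have G1 : (algebraMap GaussianInt N π) ^ k * (algebraMap GaussianInt N t * σ (bN 3 : N))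
        = algebraMap GaussianInt N c₀ + algebraMap GaussianInt N c₁ * (algebraMap GaussianInt N Zsqrtd.sqrtd * α) - algebraMap GaussianInt N c₂ * α ^ 2 - algebraMap GaussianInt N Zsqrtd.sqrtd * α ^ 3 := by
      linear_combination G1raw + (α ^ 2 * (algebraMap GaussianInt N c₂) + α ^ 3 * (algebraMap GaussianInt N Zsqrtd.sqrtd)) * hJ2
    have G2raw := congrArg σ G1
    simp only [map_mul, map_add, map_sub, map_pow, hσφ, hσα] at G2raw
    have G2 : (algebraMap GaussianInt N π) ^ k * (algebraMap GaussianInt N t * σ (σ (bN 3 : N)))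
        = algebraMap GaussianInt N c₀ - algebraMap GaussianInt N c₁ * α + algebraMap GaussianInt N c₂ * α ^ 2 - α ^ 3 := by
      linear_combination G2raw + (α * (algebraMap GaussianInt N c₁) - α ^ 2 * (algebraMap GaussianInt N c₂) + α ^ 3
        - α ^ 3 * (algebraMap GaussianInt N Zsqrtd.sqrtd) ^ 2) * hJ2
    have G3raw := congrArg σ G2
    simp only [map_mul, map_add, map_sub, map_pow, hσφ, hσα] at G3raw
    have G3 : (algebraMap GaussianInt N π) ^ k * (algebraMap GaussianInt N t * σ (σ (σ (bN 3 : N))))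
        = algebraMap GaussianInt N c₀ - algebraMap GaussianInt N c₁ * (algebraMap GaussianInt N Zsqrtd.sqrtd * α) - algebraMap GaussianInt N c₂ * α ^ 2 + algebraMap GaussianInt N Zsqrtd.sqrtd * α ^ 3 := by
      linear_combination G3raw + (α ^ 2 * (algebraMap GaussianInt N c₂) - α ^ 3 * (algebraMap GaussianInt N Zsqrtd.sqrtd)) * hJ2
    -- (A) π^k ∣ c₀
    have hS1 : algebraMap GaussianInt N (π ^ k) * ((algebraMap GaussianInt N t * (bN 3 : N)) + (algebraMap GaussianInt N t * σ (bN 3 : N))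
        + (algebraMap GaussianInt N t * σ (σ (bN 3 : N))) + (algebraMap GaussianInt N t * σ (σ (σ (bN 3 : N)))))
        = algebraMap GaussianInt N (4 * c₀) := by
      simp only [map_pow, map_mul, map_ofNat]
      linear_combination G0 + G1 + G2 + G3
    have hA : π ^ k ∣ c₀ := (hπ4.pow_left).dvd_of_dvd_mul_left
      (QuarticKummerAux.dvd_of_integral K N _ _ _ (pow_ne_zero k hπ0)
        (((hW0i.add hW1i).add hW2i).add hW3i) hS1)
    -- (B) π^k ∣ m
    have hS2 : algebraMap GaussianInt N (π ^ k) * (α * (algebraMap GaussianInt N t * (bN 3 : N)) + algebraMap GaussianInt N Zsqrtd.sqrtd * α * (algebraMap GaussianInt N t * σ (bN 3 : N))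
        - α * (algebraMap GaussianInt N t * σ (σ (bN 3 : N))) - algebraMap GaussianInt N Zsqrtd.sqrtd * α * (algebraMap GaussianInt N t * σ (σ (σ (bN 3 : N)))))
        = algebraMap GaussianInt N (4 * (f * g ^ 2 * h ^ 3)) := by
      simp only [map_pow, map_mul, map_ofNat]
      linear_combination α * G0 + algebraMap GaussianInt N Zsqrtd.sqrtd * α * G1 - α * G2 - algebraMap GaussianInt N Zsqrtd.sqrtd * α * G3
        + (2 * α ^ 2 * (algebraMap GaussianInt N c₁) - 2 * α ^ 4) * hJ2 + 4 * hα'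
    have hB : π ^ k ∣ f * g ^ 2 * h ^ 3 := (hπ4.pow_left).dvd_of_dvd_mul_left
      (QuarticKummerAux.dvd_of_integral K N _ _ _ (pow_ne_zero k hπ0)
        ((((hαi.mul hW0i).add ((hJi.mul hαi).mul hW1i)).sub (hαi.mul hW2i)).sub
          ((hJi.mul hαi).mul hW3i)) hS2)
    -- squares
    have Gsq0 : ((algebraMap GaussianInt N π) ^ k * (algebraMap GaussianInt N t * (bN 3 : N))) ^ 2
        = (algebraMap GaussianInt N c₀ + algebraMap GaussianInt N c₁ * α + algebraMap GaussianInt N c₂ * α ^ 2 + α ^ 3) ^ 2 := by rw [G0]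
    have Gsq1 : ((algebraMap GaussianInt N π) ^ k * (algebraMap GaussianInt N t * σ (bN 3 : N))) ^ 2
        = (algebraMap GaussianInt N c₀ + algebraMap GaussianInt N c₁ * (algebraMap GaussianInt N Zsqrtd.sqrtd * α) - algebraMap GaussianInt N c₂ * α ^ 2 - algebraMap GaussianInt N Zsqrtd.sqrtd * α ^ 3) ^ 2 := by rw [G1]
    have Gsq2 : ((algebraMap GaussianInt N π) ^ k * (algebraMap GaussianInt N t * σ (σ (bN 3 : N)))) ^ 2
        = (algebraMap GaussianInt N c₀ - algebraMap GaussianInt N c₁ * α + algebraMap GaussianInt N c₂ * α ^ 2 - α ^ 3) ^ 2 := by rw [G2]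
    have Gsq3 : ((algebraMap GaussianInt N π) ^ k * (algebraMap GaussianInt N t * σ (σ (σ (bN 3 : N))))) ^ 2
        = (algebraMap GaussianInt N c₀ - algebraMap GaussianInt N c₁ * (algebraMap GaussianInt N Zsqrtd.sqrtd * α) - algebraMap GaussianInt N c₂ * α ^ 2 + algebraMap GaussianInt N Zsqrtd.sqrtd * α ^ 3) ^ 2 := by rw [G3]
    -- (E)
    have hS5 : algebraMap GaussianInt N ((π ^ k) ^ 2) * ((algebraMap GaussianInt N t * (bN 3 : N)) ^ 2 + (algebraMap GaussianInt N t * σ (bN 3 : N)) ^ 2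
        + (algebraMap GaussianInt N t * σ (σ (bN 3 : N))) ^ 2 + (algebraMap GaussianInt N t * σ (σ (σ (bN 3 : N)))) ^ 2)
        = algebraMap GaussianInt N (4 * (c₀ ^ 2 + f * g ^ 2 * h ^ 3 * c₂ ^ 2 + 2 * (f * g ^ 2 * h ^ 3) * c₁)) := by
      simp only [map_pow, map_mul, map_add, map_ofNat]
      linear_combination Gsq0 + Gsq1 + Gsq2 + Gsq3
        + (2 * α ^ 2 * (algebraMap GaussianInt N c₁) ^ 2 - 4 * α ^ 4 * (algebraMap GaussianInt N c₁) + 2 * α ^ 6) * hJ2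
        + (4 * (algebraMap GaussianInt N c₂) ^ 2 + 8 * (algebraMap GaussianInt N c₁)) * hα'
    have hE' : (π ^ k) ^ 2 ∣ c₀ ^ 2 + f * g ^ 2 * h ^ 3 * c₂ ^ 2 + 2 * (f * g ^ 2 * h ^ 3) * c₁ :=
      ((hπ4.pow_left).pow_left).dvd_of_dvd_mul_left
        (QuarticKummerAux.dvd_of_integral K N _ _ _ (pow_ne_zero 2 (pow_ne_zero k hπ0))
          ((((hW0i.pow 2).add (hW1i.pow 2)).add (hW2i.pow 2)).add (hW3i.pow 2)) hS5)
    -- (G)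
    have hS6 : algebraMap GaussianInt N ((π ^ k) ^ 2) * (α ^ 2 * ((algebraMap GaussianInt N t * (bN 3 : N)) ^ 2
        - (algebraMap GaussianInt N t * σ (bN 3 : N)) ^ 2 + (algebraMap GaussianInt N t * σ (σ (bN 3 : N))) ^ 2
        - (algebraMap GaussianInt N t * σ (σ (σ (bN 3 : N)))) ^ 2))
        = algebraMap GaussianInt N (4 * (f * g ^ 2 * h ^ 3 * (c₁ ^ 2 + 2 * c₀ * c₂) + (f * g ^ 2 * h ^ 3) ^ 2)) := by
      simp only [map_pow, map_mul, map_add, map_ofNat]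
      linear_combination α ^ 2 * Gsq0 - α ^ 2 * Gsq1 + α ^ 2 * Gsq2 - α ^ 2 * Gsq3
        + (-2 * α ^ 4 * (algebraMap GaussianInt N c₁) ^ 2 + 4 * α ^ 6 * (algebraMap GaussianInt N c₁) - 2 * α ^ 8) * hJ2
        + (4 * (algebraMap GaussianInt N f * (algebraMap GaussianInt N g) ^ 2 * (algebraMap GaussianInt N h) ^ 3) + 4 * (algebraMap GaussianInt N c₁) ^ 2
          + 8 * (algebraMap GaussianInt N c₀) * (algebraMap GaussianInt N c₂) + 4 * α ^ 4) * hα'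
    have hG' : (π ^ k) ^ 2 ∣ f * g ^ 2 * h ^ 3 * (c₁ ^ 2 + 2 * c₀ * c₂) + (f * g ^ 2 * h ^ 3) ^ 2 :=
      ((hπ4.pow_left).pow_left).dvd_of_dvd_mul_left
        (QuarticKummerAux.dvd_of_integral K N _ _ _ (pow_ne_zero 2 (pow_ne_zero k hπ0))
          ((hαi.pow 2).mul ((((hW0i.pow 2).sub (hW1i.pow 2)).add (hW2i.pow 2)).sub (hW3i.pow 2))) hS6)
    -- (H) product
    have Gpr : ((algebraMap GaussianInt N π) ^ k * (algebraMap GaussianInt N t * (bN 3 : N)))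
        * ((algebraMap GaussianInt N π) ^ k * (algebraMap GaussianInt N t * σ (bN 3 : N)))
        * ((algebraMap GaussianInt N π) ^ k * (algebraMap GaussianInt N t * σ (σ (bN 3 : N))))
        * ((algebraMap GaussianInt N π) ^ k * (algebraMap GaussianInt N t * σ (σ (σ (bN 3 : N)))))
        = (algebraMap GaussianInt N c₀ + algebraMap GaussianInt N c₁ * α + algebraMap GaussianInt N c₂ * α ^ 2 + α ^ 3)
        * (algebraMap GaussianInt N c₀ + algebraMap GaussianInt N c₁ * (algebraMap GaussianInt N Zsqrtd.sqrtd * α) - algebraMap GaussianInt N c₂ * α ^ 2 - algebraMap GaussianInt N Zsqrtd.sqrtd * α ^ 3)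
        * (algebraMap GaussianInt N c₀ - algebraMap GaussianInt N c₁ * α + algebraMap GaussianInt N c₂ * α ^ 2 - α ^ 3)
        * (algebraMap GaussianInt N c₀ - algebraMap GaussianInt N c₁ * (algebraMap GaussianInt N Zsqrtd.sqrtd * α) - algebraMap GaussianInt N c₂ * α ^ 2 + algebraMap GaussianInt N Zsqrtd.sqrtd * α ^ 3) := by
      rw [G0, G1, G2, G3]
    have hS7 : algebraMap GaussianInt N ((π ^ k) ^ 4) * ((algebraMap GaussianInt N t * (bN 3 : N)) * (algebraMap GaussianInt N t * σ (bN 3 : N))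
        * (algebraMap GaussianInt N t * σ (σ (bN 3 : N))) * (algebraMap GaussianInt N t * σ (σ (σ (bN 3 : N)))))
        = algebraMap GaussianInt N ((c₀ ^ 2 + f * g ^ 2 * h ^ 3 * (c₂ ^ 2 - 2 * c₁)) ^ 2 - f * g ^ 2 * h ^ 3 * (2 * c₀ * c₂ - c₁ ^ 2 - f * g ^ 2 * h ^ 3) ^ 2) := by
      simp only [map_pow, map_mul, map_add, map_sub, map_ofNat]
      linear_combination Gpr
        + (-(α ^ 2 * (algebraMap GaussianInt N c₀) ^ 2 * (algebraMap GaussianInt N c₁) ^ 2) + α ^ 4 * (algebraMap GaussianInt N c₁) ^ 4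
          - 2 * α ^ 4 * (algebraMap GaussianInt N c₀) * (algebraMap GaussianInt N c₁) ^ 2 * (algebraMap GaussianInt N c₂)
          + 2 * α ^ 4 * (algebraMap GaussianInt N c₀) ^ 2 * (algebraMap GaussianInt N c₁)
          - α ^ 6 * (algebraMap GaussianInt N c₁) ^ 2 * (algebraMap GaussianInt N c₂) ^ 2
          + 4 * α ^ 6 * (algebraMap GaussianInt N c₀) * (algebraMap GaussianInt N c₁) * (algebraMap GaussianInt N c₂)
          - α ^ 6 * (algebraMap GaussianInt N c₀) ^ 2 + 2 * α ^ 8 * (algebraMap GaussianInt N c₁) * (algebraMap GaussianInt N c₂) ^ 2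
          - 2 * α ^ 8 * (algebraMap GaussianInt N c₁) ^ 2 - 2 * α ^ 8 * (algebraMap GaussianInt N c₀) * (algebraMap GaussianInt N c₂)
          - α ^ 10 * (algebraMap GaussianInt N c₂) ^ 2 + α ^ 12) * hJ2
        + (-(algebraMap GaussianInt N f * (algebraMap GaussianInt N g) ^ 2 * (algebraMap GaussianInt N h) ^ 3) ^ 2
          + (algebraMap GaussianInt N c₂) ^ 4 * (algebraMap GaussianInt N f * (algebraMap GaussianInt N g) ^ 2 * (algebraMap GaussianInt N h) ^ 3)
          - 4 * (algebraMap GaussianInt N c₁) * (algebraMap GaussianInt N c₂) ^ 2 * (algebraMap GaussianInt N f * (algebraMap GaussianInt N g) ^ 2 * (algebraMap GaussianInt N h) ^ 3)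
          + 2 * (algebraMap GaussianInt N c₁) ^ 2 * (algebraMap GaussianInt N f * (algebraMap GaussianInt N g) ^ 2 * (algebraMap GaussianInt N h) ^ 3)
          - (algebraMap GaussianInt N c₁) ^ 4
          + 4 * (algebraMap GaussianInt N c₀) * (algebraMap GaussianInt N c₂) * (algebraMap GaussianInt N f * (algebraMap GaussianInt N g) ^ 2 * (algebraMap GaussianInt N h) ^ 3)
          + 4 * (algebraMap GaussianInt N c₀) * (algebraMap GaussianInt N c₁) ^ 2 * (algebraMap GaussianInt N c₂)
          - 2 * (algebraMap GaussianInt N c₀) ^ 2 * (algebraMap GaussianInt N c₂) ^ 2 - 4 * (algebraMap GaussianInt N c₀) ^ 2 * (algebraMap GaussianInt N c₁)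
          - α ^ 4 * (algebraMap GaussianInt N f * (algebraMap GaussianInt N g) ^ 2 * (algebraMap GaussianInt N h) ^ 3)
          + α ^ 4 * (algebraMap GaussianInt N c₂) ^ 4 - 4 * α ^ 4 * (algebraMap GaussianInt N c₁) * (algebraMap GaussianInt N c₂) ^ 2
          + 2 * α ^ 4 * (algebraMap GaussianInt N c₁) ^ 2 + 4 * α ^ 4 * (algebraMap GaussianInt N c₀) * (algebraMap GaussianInt N c₂)
          - α ^ 8) * hα'
    have hH' : (π ^ k) ^ 4 ∣ (c₀ ^ 2 + f * g ^ 2 * h ^ 3 * (c₂ ^ 2 - 2 * c₁)) ^ 2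
        - f * g ^ 2 * h ^ 3 * (2 * c₀ * c₂ - c₁ ^ 2 - f * g ^ 2 * h ^ 3) ^ 2 :=
      QuarticKummerAux.dvd_of_integral K N _ _ _ (pow_ne_zero 4 (pow_ne_zero k hπ0))
        (((hW0i.mul hW1i).mul hW2i).mul hW3i) hS7
    have hE : π ^ (2 * k) ∣ c₀ ^ 2 + f * g ^ 2 * h ^ 3 * c₂ ^ 2 + 2 * (f * g ^ 2 * h ^ 3) * c₁ := by
      rw [show 2 * k = k * 2 by ring, pow_mul]; exact hE'
    have hG : π ^ (2 * k) ∣ f * g ^ 2 * h ^ 3 * (c₁ ^ 2 + 2 * c₀ * c₂) + (f * g ^ 2 * h ^ 3) ^ 2 := by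
      rw [show 2 * k = k * 2 by ring, pow_mul]; exact hG'
    have hH : π ^ (4 * k) ∣ (c₀ ^ 2 + f * g ^ 2 * h ^ 3 * (c₂ ^ 2 - 2 * c₁)) ^ 2
        - f * g ^ 2 * h ^ 3 * (2 * c₀ * c₂ - c₁ ^ 2 - f * g ^ 2 * h ^ 3) ^ 2 := by
      rw [show 4 * k = k * 4 by ring, pow_mul]; exact hH'
    exact QuarticKummerAux.key3 hπ hc2 hf hg hh hfg hfh hgh k hB hA hE hG hH
  exact ⟨fun k => ⟨claim2 k, fun hk => dvd_trans hk hgh2⟩,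
    fun k => ⟨claim3 k, fun hk => dvd_trans hk hgh3⟩⟩
end

section
/- Let {1, (a₀+α)/d₁, (b₀+b₁α+α²)/d₂, (c₀+c₁α+c₂α²+α³)/d₃} be a normalised integral basis of O_N over ℤ[i]. Then ν_{1+i}(d₁) ≤ 1, and ν_{1+i}(d₁) = 1 if and only if m ≡ 1 (mod 4ℤ[i]). -/
open Polynomial IntermediateField

local notation "π" => (1 + Zsqrtd.sqrtd : GaussianInt)

lemma pi4 : (π)^4 = -4 := by decide

lemma not_unit_pi : ¬ IsUnit (π) := by
  rw [← Zsqrtd.norm_eq_one_iff]; decide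

lemma prime_pi : Prime (π) := by
  rw [← UniqueFactorizationMonoid.irreducible_iff_prime]
  constructor
  · exact not_unit_pi
  · intro a b hab
    have h2 : (Zsqrtd.norm a).natAbs * (Zsqrtd.norm b).natAbs = 2 := by
      have := congrArg (fun z => (Zsqrtd.norm z).natAbs) hab
      simpa [Zsqrtd.norm_mul, Int.natAbs_mul, show (Zsqrtd.norm (π)).natAbs = 2 by decide] using this.symm
    have hd : (Zsqrtd.norm a).natAbs ∣ 2 := ⟨_, h2.symm⟩
    rcases (Nat.prime_two.eq_one_or_self_of_dvd _ hd) with h | h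
    · exact Or.inl (Zsqrtd.norm_eq_one_iff.1 h)
    · right
      rw [h] at h2
      exact Zsqrtd.norm_eq_one_iff.1 (by omega)

lemma ppi_dvd_iff (z : GaussianInt) : π ∣ z ↔ Even (z.re + z.im) := by
  constructor
  · rintro ⟨w, rfl⟩
    have hre : ((1 + Zsqrtd.sqrtd) * w).re = w.re - w.im := by
      simp [Zsqrtd.re_mul]; ring
    have him : ((1 + Zsqrtd.sqrtd) * w).im = w.re + w.im := by
      simp [Zsqrtd.im_mul]; ring
    rw [hre, him]
    exact ⟨w.re, by ring⟩
  · rintro ⟨k, hk⟩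
    refine ⟨⟨k, z.im - k⟩ , ?_⟩
    have : z.re = 2*k - z.im := by omega
    ext <;> simp [Zsqrtd.re_mul, Zsqrtd.im_mul, this] <;> ring

lemma four_dvd_pow_sub_one {x : GaussianInt} (hx : ¬ π ∣ x) : (4:GaussianInt) ∣ x^4 - 1 := by
  have hx1 : π ∣ x - 1 := by
    have h := (ppi_dvd_iff (x*x - x)).2 ?_
    · have : π ∣ x * (x - 1) := by
        have : x * (x-1) = x*x - x := by ring
        rw [this]; exact h
      rcases prime_pi.2.2 _ _ this with h' | h'
      · exact absurd h' hx
      · exact h'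
    · have : (x*x - x).re + (x*x - x).im = x.re*x.re - x.im*x.im - x.re + (x.re*x.im + x.im*x.re - x.im) := by
        simp [Zsqrtd.re_mul, Zsqrtd.im_mul, Zsqrtd.re_sub, Zsqrtd.im_sub]; ring
      rw [this]
      simp only [Int.even_add, Int.even_sub, Int.even_mul]
      tauto
  have h2 : π ∣ x + 1 := by
    have : x + 1 = (x - 1) + π * (π * (-Zsqrtd.sqrtd)) := by
      have : (π * (π * (-Zsqrtd.sqrtd)) : GaussianInt) = 2 := by decide
      rw [this]; ring
    rw [this]; exact dvd_add hx1 (Dvd.intro _ rfl)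
  have h3 : π ∣ x - Zsqrtd.sqrtd := by
    have : x - Zsqrtd.sqrtd = (x - 1) + π * (-Zsqrtd.sqrtd) := by
      have : (π * (-Zsqrtd.sqrtd) : GaussianInt) = 1 - Zsqrtd.sqrtd := by decide
      rw [this]; ring
    rw [this]; exact dvd_add hx1 (Dvd.intro _ rfl)
  have h4 : π ∣ x + Zsqrtd.sqrtd := by
    have : x + Zsqrtd.sqrtd = (x - 1) + π * 1 := by ring
    rw [this]; exact dvd_add hx1 (Dvd.intro _ rfl)
  have key : π^4 ∣ (x-1)*(x+1)*(x - Zsqrtd.sqrtd)*(x + Zsqrtd.sqrtd) :=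
    mul_dvd_mul (mul_dvd_mul (mul_dvd_mul hx1 h2) h3) h4
  have expand : (x-1)*(x+1)*(x - Zsqrtd.sqrtd)*(x + Zsqrtd.sqrtd) = x^4 - 1 := by
    have hs : (Zsqrtd.sqrtd * Zsqrtd.sqrtd : GaussianInt) = -1 := by decide
    ring_nf
    rw [show (Zsqrtd.sqrtd^2 : GaussianInt) = -1 from by rw [pow_two]; exact hs]
    ring
  rw [expand, pi4] at key
  exact (neg_dvd.mp key)

lemma not_pi4_dvd {f g h : GaussianInt} (hf : Squarefree f) (hg : Squarefree g)
    (hh : Squarefree h) (hfg : IsCoprime f g) (hfh : IsCoprime f h) (hgh : IsCoprime g h) :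
    ¬ (π)^4 ∣ f * g^2 * h^3 := by
  intro hd
  have hπ := prime_pi
  have hπ0 : (π) ≠ 0 := hπ.ne_zero
  have hdvd1 : (π) ∣ f * g^2 * h^3 := dvd_trans (dvd_pow_self _ (by norm_num)) hd
  rcases hπ.2.2 _ _ hdvd1 with hd2 | hdh
  · rcases hπ.2.2 _ _ hd2 with hdf | hdg
    · have hng : ¬ (π) ∣ g := fun hg' => not_unit_pi (hfg.isUnit_of_dvd' hdf hg')
      have hnh : ¬ (π) ∣ h := fun hh' => not_unit_pi (hfh.isUnit_of_dvd' hdf hh')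
      have hnw : ¬ (π) ∣ g^2 * h^3 := by
        intro hw
        rcases hπ.2.2 _ _ hw with hw | hw
        · exact hng (hπ.dvd_of_dvd_pow hw)
        · exact hnh (hπ.dvd_of_dvd_pow hw)
      have h4f : (π)^4 ∣ f := hπ.pow_dvd_of_dvd_mul_right 4 hnw (by rwa [mul_assoc] at hd)
      have h2f : (π) * (π) ∣ f := by
        have : (π)^2 ∣ f := dvd_trans (pow_dvd_pow _ (by norm_num)) h4f
        rwa [sq] at this
      exact not_unit_pi (hf _ h2f)
    · have hdg' : (π) ∣ g := hπ.dvd_of_dvd_pow hdg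
      obtain ⟨g', rfl⟩ := hdg'
      have hng' : ¬ (π) ∣ g' := by
        intro hc
        obtain ⟨g'', rfl⟩ := hc
        exact not_unit_pi (hg _ (by rw [← mul_assoc]; exact Dvd.intro _ rfl))
      have hnf : ¬ (π) ∣ f := fun hf' => not_unit_pi (hfg.isUnit_of_dvd' hf' (Dvd.intro _ rfl))
      have hnh : ¬ (π) ∣ h := fun hh' => not_unit_pi (hgh.isUnit_of_dvd' (Dvd.intro _ rfl) hh')
      have hrw : f * ((π) * g')^2 * h^3 = (π)^2 * (g'^2 * (f * h^3)) := by ring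
      rw [hrw] at hd
      have h4 : (π)^4 = (π)^2 * (π)^2 := by ring
      rw [h4] at hd
      have hd' : (π)^2 ∣ g'^2 * (f*h^3) :=
        (mul_dvd_mul_iff_left (pow_ne_zero 2 hπ0)).mp hd
      have : (π) ∣ g'^2 * (f*h^3) := dvd_trans (dvd_pow_self _ (by norm_num)) hd'
      rcases hπ.2.2 _ _ this with hw | hw
      · exact hng' (hπ.dvd_of_dvd_pow hw)
      · rcases hπ.2.2 _ _ hw with hw | hw
        · exact hnf hw
        · exact hnh (hπ.dvd_of_dvd_pow hw)
  · have hdh' : (π) ∣ h := hπ.dvd_of_dvd_pow hdh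
    obtain ⟨h', rfl⟩ := hdh'
    have hnh' : ¬ (π) ∣ h' := by
      intro hc
      obtain ⟨h'', rfl⟩ := hc
      exact not_unit_pi (hh _ (by rw [← mul_assoc]; exact Dvd.intro _ rfl))
    have hnf : ¬ (π) ∣ f := fun hf' => not_unit_pi (hfh.isUnit_of_dvd' hf' (Dvd.intro _ rfl))
    have hng : ¬ (π) ∣ g := fun hg' => not_unit_pi (hgh.isUnit_of_dvd' hg' (Dvd.intro _ rfl))
    have hrw : f * g^2 * ((π) * h')^3 = (π)^3 * (h'^3 * (f * g^2)) := by ring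
    rw [hrw] at hd
    have h4 : (π)^4 = (π)^3 * (π) := by ring
    rw [h4] at hd
    have hd' : (π) ∣ h'^3 * (f*g^2) :=
      (mul_dvd_mul_iff_left (pow_ne_zero 3 hπ0)).mp hd
    rcases hπ.2.2 _ _ hd' with hw | hw
    · exact hnh' (hπ.dvd_of_dvd_pow hw)
    · rcases hπ.2.2 _ _ hw with hw | hw
      · exact hnf hw
      · exact hng (hπ.dvd_of_dvd_pow hw)

lemma mylemma_eq_of_monic_dvd {K : Type*} [Field K] {p q : K[X]} (hp : p.Monic) (hq : q.Monic)
    (hdvd : p ∣ q) (hdeg : p.natDegree = q.natDegree) : p = q := by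
  obtain ⟨c, rfl⟩ := hdvd
  have hc : c.Monic := hp.of_mul_monic_left hq
  have hdc : c.natDegree = 0 := by
    have := Polynomial.natDegree_mul hp.ne_zero hc.ne_zero
    omega
  rw [(Polynomial.Monic.natDegree_eq_zero hc).1 hdc, mul_one]

lemma mylemma_minpoly_deg {K N : Type*} [Field K] [Field N] [Algebra K N]
    [FiniteDimensional K N] {x : N} (hx : Algebra.adjoin K {x} = ⊤) :
    (minpoly K x).natDegree = Module.finrank K N := by
  have hint : IsIntegral K x := IsIntegral.of_finite K x
  rw [← IntermediateField.adjoin.finrank hint]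
  have : K⟮x⟯ = ⊤ := IntermediateField.toSubalgebra_injective (by
    rw [IntermediateField.adjoin_simple_toSubalgebra_of_isAlgebraic hint.isAlgebraic, hx,
      IntermediateField.top_toSubalgebra])
  rw [this, IntermediateField.finrank_top']

lemma mylemma_indep4 {K N : Type*} [Field K] [Field N] [Algebra K N]
    [FiniteDimensional K N] (hdim : Module.finrank K N = 4) {x : N}
    (hx : Algebra.adjoin K {x} = ⊤) (u : Fin 4 → K)
    (hrel : algebraMap K N (u 0) + algebraMap K N (u 1) * x + algebraMap K N (u 2) * x ^ 2
      + algebraMap K N (u 3) * x ^ 3 = 0) : ∀ j, u j = 0 := by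
  set p : Polynomial K := C (u 0) + C (u 1) * X + C (u 2) * X ^ 2 + C (u 3) * X ^ 3 with hpdef
  have hp : Polynomial.aeval x p = 0 := by
    simp only [hpdef, map_add, map_mul, map_pow, aeval_C, aeval_X]
    exact hrel
  have hp0 : p = 0 := by
    by_contra hne
    have h1 := minpoly.degree_le_of_ne_zero K x hne hp
    have h2 : p.degree ≤ 3 := by
      rw [hpdef]
      compute_degree
    have h3 : (minpoly K x).natDegree = 4 := by rw [mylemma_minpoly_deg hx, hdim]
    have h4 : (minpoly K x).degree = 4 := by
      rw [Polynomial.degree_eq_natDegree (minpoly.ne_zero_of_finite K x), h3]; rfl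
    rw [h4] at h1
    have := le_trans h1 h2
    norm_num at this
  have hcoeff : ∀ j : Fin 4, p.coeff j = u j := by
    intro j
    fin_cases j <;>
      simp [hpdef, coeff_add, coeff_C, coeff_C_mul, coeff_X_pow, coeff_X]
  intro j
  rw [← hcoeff j, hp0, Polynomial.coeff_zero]

set_option maxHeartbeats 2000000 in
/-- For a normalised integral basis of `O_N` over `ℤ[i]`: `ν_{1+i}(d₁) ≤ 1`, and
`ν_{1+i}(d₁) = 1` if and only if `m ≡ 1 (mod 4ℤ[i])`. -/
theorem quartic_kummer_even_part_of_d1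
(f g h : GaussianInt) (hf : Squarefree f) (hg : Squarefree g) (hh : Squarefree h)
    (hfg : IsCoprime f g) (hfh : IsCoprime f h) (hgh : IsCoprime g h)
    (K N : Type*) [Field K] [Field N]
    [Algebra GaussianInt K] [IsFractionRing GaussianInt K]
    [Algebra K N] [Algebra GaussianInt N] [IsScalarTower GaussianInt K N]
    [FiniteDimensional K N] (hdim : Module.finrank K N = 4)
    (α : N) (hα : α ^ 4 = algebraMap GaussianInt N (f * g ^ 2 * h ^ 3))
    (hgen : Algebra.adjoin K {α} = ⊤)
    (a₀ b₀ b₁ c₀ c₁ c₂ d₁ d₂ d₃ : GaussianInt)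
    (bN : Module.Basis (Fin 4) GaussianInt (integralClosure GaussianInt N))
    (hb0 : (bN 0 : N) = 1)
    (hb1 : algebraMap GaussianInt N d₁ * (bN 1 : N) = algebraMap GaussianInt N a₀ + α)
    (hb2 : algebraMap GaussianInt N d₂ * (bN 2 : N) =
      algebraMap GaussianInt N b₀ + algebraMap GaussianInt N b₁ * α + α ^ 2)
    (hb3 : algebraMap GaussianInt N d₃ * (bN 3 : N) =
      algebraMap GaussianInt N c₀ + algebraMap GaussianInt N c₁ * α +
        algebraMap GaussianInt N c₂ * α ^ 2 + α ^ 3) :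
    ¬ (1 + Zsqrtd.sqrtd : GaussianInt) ^ 2 ∣ d₁ ∧
    ((1 + Zsqrtd.sqrtd : GaussianInt) ∣ d₁ ↔
      (4 : GaussianInt) ∣ (f * g ^ 2 * h ^ 3 - 1)) := by
  set m : GaussianInt := f * g ^ 2 * h ^ 3 with hm
  have hπ0 : (π) ≠ 0 := prime_pi.ne_zero
  have hinjK : Function.Injective (algebraMap GaussianInt K) := IsFractionRing.injective GaussianInt K
  have hinj : Function.Injective (algebraMap GaussianInt N) := by
    rw [IsScalarTower.algebraMap_eq GaussianInt K N]
    exact (algebraMap K N).injective.comp hinjK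
  -- GaussianInt-coefficient independence of 1, α, α², α³
  have hindR : ∀ u : Fin 4 → GaussianInt,
      algebraMap GaussianInt N (u 0) + algebraMap GaussianInt N (u 1) * α + algebraMap GaussianInt N (u 2) * α ^ 2
        + algebraMap GaussianInt N (u 3) * α ^ 3 = 0 → ∀ j, u j = 0 := by
    intro u hrel j
    have h := mylemma_indep4 hdim hgen (fun i => algebraMap GaussianInt K (u i))
      (by simpa only [← IsScalarTower.algebraMap_apply] using hrel) j
    exact hinjK (by rw [h, map_zero])
  -- nonvanishing of the denominators
  have hd₁0 : d₁ ≠ 0 := by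
    intro h0
    rw [h0, map_zero, zero_mul] at hb1
    have := hindR ![-a₀, -1, 0, 0] (by
      simp only [Matrix.cons_val_zero, Matrix.cons_val_one, Matrix.head_cons,
        Matrix.cons_val_two, Matrix.tail_cons, Matrix.cons_val_three, map_neg, map_zero, map_one]
      linear_combination hb1) 1
    simp at this
  have hd₂0 : d₂ ≠ 0 := by
    intro h0
    rw [h0, map_zero, zero_mul] at hb2
    have := hindR ![-b₀, -b₁, -1, 0] (by
      simp only [Matrix.cons_val_zero, Matrix.cons_val_one, Matrix.head_cons,
        Matrix.cons_val_two, Matrix.tail_cons, Matrix.cons_val_three, map_neg, map_zero, map_one]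
      linear_combination hb2) 2
    simp at this
  have hd₃0 : d₃ ≠ 0 := by
    intro h0
    rw [h0, map_zero, zero_mul] at hb3
    have := hindR ![-c₀, -c₁, -c₂, -1] (by
      simp only [Matrix.cons_val_zero, Matrix.cons_val_one, Matrix.head_cons,
        Matrix.cons_val_two, Matrix.tail_cons, Matrix.cons_val_three, map_neg, map_zero, map_one]
      linear_combination hb3) 3
    simp at this
  -- the key divisibilities coming from integrality of bN 1
  have key : d₁^3 ∣ 4 * a₀^3 ∧ d₁^4 ∣ a₀^4 - m := by
    have hβint : IsIntegral GaussianInt ((bN 1 : N)) := (bN 1).2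
    have hgenβ : Algebra.adjoin K {(bN 1 : N)} = ⊤ := by
      rw [eq_top_iff, ← hgen]
      apply Algebra.adjoin_le
      intro x hx
      rw [Set.mem_singleton_iff] at hx
      rw [hx]
      have hd₁mem : algebraMap GaussianInt N d₁ ∈ Algebra.adjoin K {(bN 1 : N)} := by
        rw [IsScalarTower.algebraMap_apply GaussianInt K N]
        exact Subalgebra.algebraMap_mem _ _
      have hamem : algebraMap GaussianInt N a₀ ∈ Algebra.adjoin K {(bN 1 : N)} := by
        rw [IsScalarTower.algebraMap_apply GaussianInt K N]
        exact Subalgebra.algebraMap_mem _ _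
      have hx : α = algebraMap GaussianInt N d₁ * (bN 1 : N) - algebraMap GaussianInt N a₀ := by
        rw [hb1]; ring
      rw [hx]
      exact Subalgebra.sub_mem _
        (Subalgebra.mul_mem _ hd₁mem (Algebra.subset_adjoin rfl)) hamem
    set A : K := algebraMap GaussianInt K a₀ with hA
    set D : K := algebraMap GaussianInt K d₁ with hD
    set M : K := algebraMap GaussianInt K m with hM
    have hD0 : D ≠ 0 := (map_ne_zero_iff _ hinjK).mpr hd₁0
    set q : Polynomial K := X^4 + C (-(4*A/D)) * X^3 + C (6*A^2/D^2) * X^2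
      + C (-(4*A^3/D^3)) * X + C ((A^4 - M)/D^4) with hq
    have hqmonic : q.Monic := by
      rw [hq]; monicity!
    have hqdeg : q.natDegree = 4 := by
      rw [hq]; compute_degree!
    have hDN : (algebraMap K N) D = algebraMap GaussianInt N d₁ :=
      (IsScalarTower.algebraMap_apply GaussianInt K N d₁).symm
    have hAN : (algebraMap K N) A = algebraMap GaussianInt N a₀ :=
      (IsScalarTower.algebraMap_apply GaussianInt K N a₀).symm
    have hMN : (algebraMap K N) M = algebraMap GaussianInt N m :=
      (IsScalarTower.algebraMap_apply GaussianInt K N m).symm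
    have hDN0 : (algebraMap K N) D ≠ 0 :=
      (map_ne_zero_iff _ (algebraMap K N).injective).mpr hD0
    have hq0 : Polynomial.aeval ((bN 1 : N)) q = 0 := by
      have expand : Polynomial.aeval ((bN 1 : N)) q
          = ((algebraMap GaussianInt N d₁)^4)⁻¹ *
            ((algebraMap GaussianInt N d₁ * (bN 1 : N) - algebraMap GaussianInt N a₀)^4
              - algebraMap GaussianInt N m) := by
        rw [hq]
        simp only [map_add, map_mul, map_pow, aeval_X, aeval_C, map_neg, map_div₀, map_sub,
          map_ofNat, hDN, hAN, hMN]
        have hdN : (algebraMap GaussianInt N d₁) ≠ 0 := by rw [← hDN]; exact hDN0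
        field_simp [hdN]
        ring
      have hsubst : algebraMap GaussianInt N d₁ * (bN 1 : N) - algebraMap GaussianInt N a₀ = α := by
        rw [hb1]; ring
      rw [expand, hsubst, hα, sub_self, mul_zero]
    have hmindeg : (minpoly K ((bN 1 : N))).natDegree = 4 := by
      rw [mylemma_minpoly_deg hgenβ, hdim]
    have hminq : minpoly K ((bN 1 : N)) = q :=
      mylemma_eq_of_monic_dvd (minpoly.monic (IsIntegral.of_finite K _)) hqmonic
        (minpoly.dvd K _ hq0) (by rw [hmindeg, hqdeg])
    have hmap : minpoly K ((bN 1 : N))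
        = (minpoly GaussianInt ((bN 1 : N))).map (algebraMap GaussianInt K) :=
      minpoly.isIntegrallyClosed_eq_field_fractions' K hβint
    set e : Polynomial GaussianInt := minpoly GaussianInt ((bN 1 : N)) with he
    have hcoeff1 : q.coeff 1 = algebraMap GaussianInt K (e.coeff 1) := by
      rw [← hminq, hmap, Polynomial.coeff_map]
    have hcoeff0 : q.coeff 0 = algebraMap GaussianInt K (e.coeff 0) := by
      rw [← hminq, hmap, Polynomial.coeff_map]
    have hqc1 : q.coeff 1 = -(4*A^3/D^3) := by
      rw [hq]
      simp [coeff_add, coeff_C, coeff_C_mul, coeff_X_pow, coeff_X]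
    have hqc0 : q.coeff 0 = (A^4 - M)/D^4 := by
      rw [hq]
      simp [coeff_add, coeff_C, coeff_C_mul, coeff_X_pow, coeff_X]
    constructor
    · refine ⟨-(e.coeff 1), hinjK ?_⟩
      have h1 : D^3 * algebraMap GaussianInt K (e.coeff 1) = -(4*A^3) := by
        rw [← hcoeff1, hqc1]
        field_simp
      simp only [map_mul, map_pow, map_neg, map_ofNat]
      rw [← hA, ← hD]
      linear_combination h1
    · refine ⟨e.coeff 0, hinjK ?_⟩
      have h0 : D^4 * algebraMap GaussianInt K (e.coeff 0) = A^4 - M := by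
        rw [← hcoeff0, hqc0]
        field_simp
      simp only [map_mul, map_pow, map_sub, map_ofNat]
      rw [← hA, ← hD, ← hM]
      linear_combination -h0
  obtain ⟨hdvd3, hdvd4⟩ := key
  have hm4 : ¬ (π)^4 ∣ m := not_pi4_dvd hf hg hh hfg hfh hgh
  constructor
  · -- ν(d₁) ≤ 1
    intro hsq
    have h6 : (π)^6 ∣ 4 * a₀^3 := by
      refine dvd_trans ?_ hdvd3
      have : (π)^6 = ((π)^2)^3 := by ring
      rw [this]
      exact pow_dvd_pow_of_dvd hsq 3
    obtain ⟨t, ht⟩ := h6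
    have ha3 : a₀^3 = -((π)^2 * t) := by
      have h4 : (4 : GaussianInt) = -(π)^4 := by rw [pi4]; ring
      rw [h4] at ht
      have : (π)^4 * (-(a₀^3)) = (π)^4 * ((π)^2 * t) := by linear_combination ht
      have := mul_left_cancel₀ (pow_ne_zero 4 hπ0) this
      linear_combination -this
    have hπa : (π) ∣ a₀ := by
      apply prime_pi.dvd_of_dvd_pow (n := 3)
      rw [ha3]
      exact dvd_neg.mpr (dvd_mul_of_dvd_left (dvd_pow_self _ (by norm_num)) t)
    have h4a : (π)^4 ∣ a₀^4 := pow_dvd_pow_of_dvd hπa 4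
    have hπd : (π) ∣ d₁ := dvd_trans (dvd_pow_self _ (by norm_num)) hsq
    have h4d : (π)^4 ∣ a₀^4 - m := (pow_dvd_pow_of_dvd hπd 4).trans hdvd4
    apply hm4
    have hrw : m = a₀^4 - (a₀^4 - m) := by ring
    rw [hrw]
    exact dvd_sub h4a h4d
  · constructor
    · intro hπd₁
      have h4d : (π)^4 ∣ a₀^4 - m := (pow_dvd_pow_of_dvd hπd₁ 4).trans hdvd4
      have hna : ¬ (π) ∣ a₀ := by
        intro hc
        apply hm4
        have hrw : m = a₀^4 - (a₀^4 - m) := by ring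
        rw [hrw]
        exact dvd_sub (pow_dvd_pow_of_dvd hc 4) h4d
      have h41 : (4:GaussianInt) ∣ a₀^4 - 1 := four_dvd_pow_sub_one hna
      have h4m : (4:GaussianInt) ∣ a₀^4 - m := by
        rw [pi4] at h4d
        exact neg_dvd.mp h4d
      have hrw : m - 1 = (a₀^4 - 1) - (a₀^4 - m) := by ring
      rw [hrw]
      exact dvd_sub h41 h4m
    · intro hrev
      obtain ⟨k, hk⟩ := hrev
      obtain ⟨π₀, hπ₀def⟩ : ∃ p : GaussianInt, p = 1 + Zsqrtd.sqrtd := ⟨_, rfl⟩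
      have hπ₀ne : π₀ ≠ 0 := by rw [hπ₀def]; exact hπ0
      set c3 : GaussianInt := ⟨-2, 2⟩ with hc3def
      set c2 : GaussianInt := ⟨0, -3⟩ with hc2def
      set c1 : GaussianInt := ⟨1, 1⟩ with hc1def
      have hc3 : π₀ * c3 = -4 := by rw [hπ₀def, hc3def]; decide
      have hc2 : π₀^2 * c2 = 6 := by rw [hπ₀def, hc2def]; decide
      have hc1 : π₀^3 * c1 = -4 := by rw [hπ₀def, hc1def]; decide
      have hc0 : π₀^4 * k = 1 - m := by
        rw [hπ₀def, pi4]
        linear_combination hk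
      have hPine : algebraMap GaussianInt N π₀ ≠ 0 := (map_ne_zero_iff _ hinj).mpr hπ₀ne
      set γ' : N := (1 + α) * (algebraMap GaussianInt N π₀)⁻¹ with hγdef
      have hπγ : algebraMap GaussianInt N π₀ * γ' = 1 + α := by
        rw [hγdef, mul_comm (1+α) _, ← mul_assoc, mul_inv_cancel₀ hPine, one_mul]
      set P : Polynomial GaussianInt := X^4 + C c3 * X^3 + C c2 * X^2 + C c1 * X + C k with hP
      have hPmonic : P.Monic := by rw [hP]; monicity!
      have hPeval : Polynomial.aeval γ' P = 0 := by
        apply mul_left_cancel₀ (pow_ne_zero 4 hPine)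
        rw [mul_zero]
        have expand : (algebraMap GaussianInt N π₀)^4 * Polynomial.aeval γ' P
            = (algebraMap GaussianInt N π₀ * γ')^4
              + algebraMap GaussianInt N (π₀ * c3) * (algebraMap GaussianInt N π₀ * γ')^3
              + algebraMap GaussianInt N (π₀^2 * c2) * (algebraMap GaussianInt N π₀ * γ')^2
              + algebraMap GaussianInt N (π₀^3 * c1) * (algebraMap GaussianInt N π₀ * γ')
              + algebraMap GaussianInt N (π₀^4 * k) := by
          rw [hP]
          simp only [map_add, map_mul, map_pow, aeval_X, aeval_C]
          ring
        rw [expand, hπγ, hc3, hc2, hc1, hc0]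
        simp only [map_neg, map_ofNat, map_sub, map_one]
        linear_combination hα
      have hint : IsIntegral GaussianInt γ' :=
        ⟨P, hPmonic, by rw [← Polynomial.aeval_def]; exact hPeval⟩
      set γel : integralClosure GaussianInt N := ⟨γ', hint⟩ with hγel
      have hrepr := bN.sum_repr γel
      have hsum := congrArg ((integralClosure GaussianInt N).val) hrepr
      rw [map_sum] at hsum
      simp only [Fin.sum_univ_four, map_smul, Subalgebra.coe_val, Algebra.smul_def,
        MulMemClass.coe_mul, SubalgebraClass.coe_algebraMap] at hsum
      rw [hb0] at hsum
      set x0 := bN.repr γel 0 with hx0def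
      set x1 := bN.repr γel 1 with hx1def
      set x2 := bN.repr γel 2 with hx2def
      set x3 := bN.repr γel 3 with hx3def
      -- hsum : aN x0 * 1 + aN x1 * bN1 + aN x2 * bN2 + aN x3 * bN3 = γ'
      have hcomb := hindR
        ![π₀*(x0*d₁*d₂*d₃ + x1*d₂*d₃*a₀ + x2*d₁*d₃*b₀ + x3*d₁*d₂*c₀) - d₁*d₂*d₃,
          π₀*(x1*d₂*d₃ + x2*d₁*d₃*b₁ + x3*d₁*d₂*c₁) - d₁*d₂*d₃,
          π₀*(x2*d₁*d₃ + x3*d₁*d₂*c₂),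
          π₀*(x3*d₁*d₂)] ?_
      · have h3 := hcomb 3
        simp only [Matrix.cons_val_three, Matrix.cons_val_two, Matrix.tail_cons,
          Matrix.head_cons, Matrix.cons_val_zero, Matrix.cons_val_one] at h3
        have hx3 : x3 = 0 := by
          rcases mul_eq_zero.mp h3 with hcase | hcase
          · exact absurd hcase hπ₀ne
          · rcases mul_eq_zero.mp hcase with hcase' | hcase'
            · rcases mul_eq_zero.mp hcase' with hc'' | hc''
              · exact hc''
              · exact absurd hc'' hd₁0
            · exact absurd hcase' hd₂0
        have h2 := hcomb 2
        simp only [Matrix.cons_val_two, Matrix.tail_cons, Matrix.head_cons,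
          Matrix.cons_val_zero, Matrix.cons_val_one] at h2
        rw [hx3] at h2
        have hx2 : x2 = 0 := by
          have h2' : π₀ * (x2 * (d₁ * d₃)) = 0 := by linear_combination h2
          rcases mul_eq_zero.mp h2' with hcase | hcase
          · exact absurd hcase hπ₀ne
          · rcases mul_eq_zero.mp hcase with hcase' | hcase'
            · exact hcase'
            · exact absurd hcase' (mul_ne_zero hd₁0 hd₃0)
        have h1 := hcomb 1
        simp only [Matrix.cons_val_one, Matrix.head_cons, Matrix.cons_val_zero] at h1
        rw [hx3, hx2] at h1
        have h1' : (d₂ * d₃) * (π₀ * x1 - d₁) = 0 := by linear_combination h1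
        rcases mul_eq_zero.mp h1' with hcase | hcase
        · exact absurd hcase (mul_ne_zero hd₂0 hd₃0)
        · refine ⟨x1, ?_⟩
          rw [← hπ₀def]
          linear_combination -hcase
      · simp only [Matrix.cons_val_zero, Matrix.cons_val_one, Matrix.head_cons,
          Matrix.cons_val_two, Matrix.tail_cons, Matrix.cons_val_three]
        simp only [map_mul, map_add, map_sub]
        linear_combination
          (algebraMap GaussianInt N (d₁) * algebraMap GaussianInt N (d₂)
            * algebraMap GaussianInt N (d₃)) * hπγ
          + (algebraMap GaussianInt N π₀ * algebraMap GaussianInt N (d₁)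
              * algebraMap GaussianInt N (d₂) * algebraMap GaussianInt N (d₃)) * hsum
          - (algebraMap GaussianInt N π₀ * algebraMap GaussianInt N x1
              * algebraMap GaussianInt N (d₂) * algebraMap GaussianInt N (d₃)) * hb1
          - (algebraMap GaussianInt N π₀ * algebraMap GaussianInt N x2
              * algebraMap GaussianInt N (d₁) * algebraMap GaussianInt N (d₃)) * hb2
          - (algebraMap GaussianInt N π₀ * algebraMap GaussianInt N x3
              * algebraMap GaussianInt N (d₁) * algebraMap GaussianInt N (d₂)) * hb3
end
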